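/- arXiv:1209.2678 — 5 statements merged into one kernel-verified Lean document; each statement's English description precedes it below -/
import Mathlib

section
/- Fix an integer K ≥ 1 and for each integer x ≥ 1 set N₁ = 3 and N₂ = x²K. Then Q_N(𝐕_{K,3,x²K}, G_{K,3,x²K}) = 1 − (4 + (x²K−1)²)/(K(1 + x²K)²), and this quantity converges to 1 − 1/K as x → ∞. -/
open scoped Classical

noncomputable section

namespace BadComm

variable {V : Type*} [Fintype V]

/-- The finset of edges of a simple graph `G`. -/
def edgeFin (G : SimpleGraph V) : Finset (Sym2 V) :=
  Finset.univ.filter (fun e => e ∈ G.edgeSet)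

/-- The number of edges `m` of `G`. -/
def numEdges (G : SimpleGraph V) : ℕ := (edgeFin G).card

/-- The degree of a node. -/
def deg (G : SimpleGraph V) (v : V) : ℕ := (Finset.univ.filter (fun w => G.Adj v w)).card

/-- A clustering is encoded as a labelling `c : V → ℕ`; cluster `k` is the set of nodes
with label `k`.  `clusterDeg G c k` is the total degree of cluster `k`. -/
def clusterDeg (G : SimpleGraph V) (c : V → ℕ) (k : ℕ) : ℕ :=
  ∑ v ∈ Finset.univ.filter (fun v => c v = k), deg G v

/-- An unordered pair is intracluster when all of its members carry the same label. -/
def sameCluster (c : V → ℕ) (p : Sym2 V) : Prop :=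
  ∀ u ∈ p, ∀ v ∈ p, c u = c v

/-- The number of intracluster edges, `∑ₖ |Eₖ|`. -/
def intraEdges (G : SimpleGraph V) (c : V → ℕ) : ℕ :=
  ((edgeFin G).filter (fun e => sameCluster c e)).card

/-- The number of extracluster edges. -/
def extraEdges (G : SimpleGraph V) (c : V → ℕ) : ℕ :=
  ((edgeFin G).filter (fun e => ¬ sameCluster c e)).card

/-- The intracluster edge fraction `Q_f = (∑ₖ |Eₖ|)/m`. -/
def Qf (G : SimpleGraph V) (c : V → ℕ) : ℝ := (intraEdges G c : ℝ) / (numEdges G : ℝ)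

/-- The null-model term `Q_0 = ∑ₖ (deg(Vₖ)/(2m))²` (summed over the nonempty clusters). -/
def Q0 (G : SimpleGraph V) (c : V → ℕ) : ℝ :=
  ∑ k ∈ Finset.univ.image c, ((clusterDeg G c k : ℝ) / (2 * (numEdges G : ℝ))) ^ 2

/-- Newman's modularity `Q_N = Q_f - Q_0`. -/
def QN (G : SimpleGraph V) (c : V → ℕ) : ℝ := Qf G c - Q0 G c

/-- The number of (nonempty) clusters of a labelling. -/
def numClusters (c : V → ℕ) : ℕ := (Finset.univ.image c).card

/-- The unordered pairs of distinct nodes. -/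
def offDiagPairs (V : Type*) [Fintype V] : Finset (Sym2 V) :=
  Finset.univ.filter (fun p => ¬ p.IsDiag)

/-- Number of node pairs in the same cluster under both clusterings. -/
def a11 (c1 c2 : V → ℕ) : ℕ :=
  ((offDiagPairs V).filter (fun p => sameCluster c1 p ∧ sameCluster c2 p)).card

/-- Number of node pairs in the same cluster under `c1` but not under `c2`. -/
def a10 (c1 c2 : V → ℕ) : ℕ :=
  ((offDiagPairs V).filter (fun p => sameCluster c1 p ∧ ¬ sameCluster c2 p)).card

/-- Number of node pairs in the same cluster under `c2` but not under `c1`. -/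
def a01 (c1 c2 : V → ℕ) : ℕ :=
  ((offDiagPairs V).filter (fun p => ¬ sameCluster c1 p ∧ sameCluster c2 p)).card

/-- The Jaccard similarity index of two clusterings. -/
def jaccard (c1 c2 : V → ℕ) : ℝ :=
  (a11 c1 c2 : ℝ) / ((a10 c1 c2 : ℝ) + (a01 c1 c2 : ℝ) + (a11 c1 c2 : ℝ))

/-- Number of (unordered) node pairs lying in the same cluster. -/
def samePairCount (c : V → ℕ) : ℕ :=
  ((offDiagPairs V).filter (fun p => sameCluster c p)).card

/-- The nodes `0,…,n-1` are split into consecutive blocks of alternating sizes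
`N₁,N₂,N₁,N₂,…`; `blockIdx N1 N2 v` is the index of the block of node `v`. -/
def blockIdx (N1 N2 v : ℕ) : ℕ :=
  2 * (v / (N1 + N2)) + (if v % (N1 + N2) < N1 then 0 else 1)

/-- The graph `G_{K,N₁,N₂}`: a disjoint union of `K` paths on `N₁` nodes and `K` paths on
`N₂` nodes, arranged as alternating consecutive blocks of `{0,…,K(N₁+N₂)-1}`. -/
def graphG (K N1 N2 : ℕ) : SimpleGraph (Fin (K * (N1 + N2))) where
  Adj u v := (u.val + 1 = v.val ∨ v.val + 1 = u.val) ∧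
             blockIdx N1 N2 u.val = blockIdx N1 N2 v.val
  symm := by constructor; rintro u v ⟨h1, h2⟩; exact ⟨h1.symm, h2.symm⟩
  loopless := by constructor; rintro u ⟨h1 | h1, -⟩ <;> omega

/-- The connected graph `H_{K,N₁,N₂}`: the path on all of `{0,…,K(N₁+N₂)-1}` together with,
inside each block, all chords joining nodes of the block at distance two. -/
def graphH (K N1 N2 : ℕ) : SimpleGraph (Fin (K * (N1 + N2))) where
  Adj u v := (u.val + 1 = v.val ∨ v.val + 1 = u.val) ∨
             ((u.val + 2 = v.val ∨ v.val + 2 = u.val) ∧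
              blockIdx N1 N2 u.val = blockIdx N1 N2 v.val)
  symm := by
    constructor
    rintro u v (h1 | ⟨h2, h3⟩)
    · exact Or.inl h1.symm
    · exact Or.inr ⟨h2.symm, h3.symm⟩
  loopless := by constructor; rintro u ((h | h) | ⟨h | h, -⟩) <;> omega

/-- The natural clustering `𝐕_{K,N₁,N₂}`: the clusters are the `2K` blocks. -/
def naturalLabel (N1 N2 : ℕ) {n : ℕ} : Fin n → ℕ := fun v => blockIdx N1 N2 v.val

/-- The balanced clustering `𝐔_{K,N₁,N₂,J}` with `L = ⌊n/J⌋`: clusters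
`U_j = {(j-1)L+1,…,jL}` for `j = 1,…,J`, plus the remainder cluster `U_{J+1}`. -/
def uLabel (J : ℕ) {n : ℕ} : Fin n → ℕ := fun v => min (v.val / (n / J)) J

end BadComm

open BadComm Filter

section Helpers

lemma blockIdx_succ (N2 v : ℕ) (hN2 : 1 ≤ N2) :
    blockIdx 3 N2 v = blockIdx 3 N2 (v + 1) ↔
      (v % (3 + N2) + 1 ≠ 3 ∧ v % (3 + N2) + 1 ≠ 3 + N2) := by
  set P := 3 + N2 with hPdef
  have hP0 : 0 < P := by omega
  have hd := Nat.div_add_mod v P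
  have hr : v % P < P := Nat.mod_lt _ hP0
  unfold blockIdx
  simp only [← hPdef]
  rcases eq_or_ne (v % P + 1) P with h | h
  · have hexp : P * (v / P + 1) = P * (v / P) + P := by ring
    have hv1 : v + 1 = P * (v / P + 1) := by omega
    have h1 : (v + 1) / P = v / P + 1 := by rw [hv1, Nat.mul_div_cancel_left _ hP0]
    have h2 : (v + 1) % P = 0 := by rw [hv1]; exact Nat.mul_mod_right _ _
    rw [h1, h2]
    split_ifs <;> omega
  · have hv1 : v + 1 = (v % P + 1) + P * (v / P) := by omega
    have h1 : (v + 1) / P = v / P := by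
      rw [hv1, Nat.add_mul_div_left _ _ hP0, Nat.div_eq_of_lt (by omega)]; omega
    have h2 : (v + 1) % P = v % P + 1 := by
      rw [hv1, Nat.add_mul_mod_self_left, Nat.mod_eq_of_lt (by omega)]
    rw [h1, h2]
    split_ifs <;> omega

lemma pred_mod (P v : ℕ) (hP : 0 < P) (hv : 1 ≤ v) :
    (v - 1) % P = if v % P = 0 then P - 1 else v % P - 1 := by
  have hd := Nat.div_add_mod v P
  have hr : v % P < P := Nat.mod_lt _ hP
  split_ifs with h
  · have hd1 : 1 ≤ v / P := by
      rcases Nat.eq_zero_or_pos (v / P) with h0 | h0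
      · rw [h0, Nat.mul_zero] at hd; omega
      · exact h0
    have hexp : P * (v / P) = P * (v / P - 1) + P := by
      obtain ⟨d, hdq⟩ : ∃ d, v / P = d + 1 := ⟨v / P - 1, by omega⟩
      rw [hdq]; simp; ring
    have hv1 : v - 1 = (P - 1) + P * (v / P - 1) := by omega
    rw [hv1, Nat.add_mul_mod_self_left, Nat.mod_eq_of_lt (by omega)]
  · have hv1 : v - 1 = (v % P - 1) + P * (v / P) := by omega
    rw [hv1, Nat.add_mul_mod_self_left, Nat.mod_eq_of_lt (by omega)]

lemma card_filter_mod (K P : ℕ) (hP : 0 < P) (p : ℕ → Prop) [DecidablePred p] :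
    (Finset.univ.filter (fun v : Fin (K * P) => p (v.val % P))).card
      = K * ((Finset.range P).filter p).card := by
  have h := Finset.card_nbij (s := Finset.univ.filter (fun v : Fin (K * P) => p (v.val % P)))
      (t := (Finset.range K) ×ˢ ((Finset.range P).filter p))
      (fun v => (v.val / P, v.val % P)) ?_ ?_ ?_
  · rw [h, Finset.card_product, Finset.card_range]
  · intro a ha
    simp only [Finset.mem_coe, Finset.mem_filter, Finset.mem_univ, true_and] at ha
    simp only [Finset.mem_coe, Finset.mem_product, Finset.mem_range, Finset.mem_filter]
    exact ⟨(Nat.div_lt_iff_lt_mul hP).2 a.isLt, Nat.mod_lt _ hP, ha⟩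
  · intro a _ b _ hab
    have h1 : a.val / P = b.val / P := congrArg Prod.fst hab
    have h2 : a.val % P = b.val % P := congrArg Prod.snd hab
    have ha := Nat.div_add_mod a.val P
    have hb := Nat.div_add_mod b.val P
    rw [h1, h2] at ha
    exact Fin.ext (by omega)
  · rintro ⟨q, r⟩ hx
    simp only [Finset.coe_product, Set.mem_prod, Finset.mem_coe, Finset.mem_range,
      Finset.mem_filter] at hx
    obtain ⟨hq, hr, hp⟩ := hx
    have hlt : P * q + r < K * P := by
      calc P * q + r < P * (q + 1) := by ring_nf; omega
      _ ≤ P * K := Nat.mul_le_mul_left P (by omega)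
      _ = K * P := by ring
    have hmod : (P * q + r) % P = r := by rw [Nat.mul_add_mod, Nat.mod_eq_of_lt hr]
    have hdiv : (P * q + r) / P = q := by
      rw [Nat.mul_add_div hP, Nat.div_eq_of_lt hr]; omega
    refine ⟨⟨P * q + r, hlt⟩, ?_, ?_⟩
    · simp only [Finset.coe_filter, Finset.mem_univ, true_and, Set.mem_setOf_eq, hmod]
      exact hp
    · simp only [hmod, hdiv]


lemma fin_succ_val {n : ℕ} [NeZero n] (v : Fin n) (h : v.val + 1 < n) : (v + 1).val = v.val + 1 := by
  have h1 : (1 : Fin n).val = 1 := by rw [Fin.val_one']; exact Nat.mod_eq_of_lt (by omega)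
  rw [Fin.val_add, h1, Nat.mod_eq_of_lt h]

lemma val_succ_lt {K N2 : ℕ} (v : Fin (K * (3 + N2)))
    (h : v.val % (3 + N2) + 1 ≠ 3 + N2) : v.val + 1 < K * (3 + N2) := by
  have hP0 : 0 < 3 + N2 := by omega
  have hd := Nat.div_add_mod v.val (3 + N2)
  have hr : v.val % (3 + N2) < 3 + N2 := Nat.mod_lt _ hP0
  have hdlt : v.val / (3 + N2) < K := (Nat.div_lt_iff_lt_mul hP0).2 v.isLt
  have hmul : (3 + N2) * (v.val / (3 + N2) + 1) ≤ (3 + N2) * K :=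
    Nat.mul_le_mul_left _ (by omega)
  have he1 : (3 + N2) * (v.val / (3 + N2) + 1) = (3 + N2) * (v.val / (3 + N2)) + (3 + N2) := by
    ring
  have he2 : (3 + N2) * K = K * (3 + N2) := by ring
  omega

lemma adj_graphG {K N2 : ℕ} (u w : Fin (K * (3 + N2))) :
    (graphG K 3 N2).Adj u w ↔
      (u.val + 1 = w.val ∨ w.val + 1 = u.val) ∧
        blockIdx 3 N2 u.val = blockIdx 3 N2 w.val := Iff.rfl

lemma edgeFin_graphG {K N2 : ℕ} [NeZero (K * (3 + N2))] (hN2 : 1 ≤ N2) :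
    edgeFin (graphG K 3 N2) =
      (Finset.univ.filter (fun v : Fin (K * (3 + N2)) =>
        v.val % (3 + N2) + 1 ≠ 3 ∧ v.val % (3 + N2) + 1 ≠ 3 + N2)).image
        (fun v => s(v, v + 1)) := by
  ext e
  induction e using Sym2.ind with
  | _ u w =>
    simp only [edgeFin, Finset.mem_filter, Finset.mem_univ, true_and,
      SimpleGraph.mem_edgeSet, Finset.mem_image, adj_graphG]
    constructor
    · rintro ⟨h1 | h1, h2⟩
      · have hc := (blockIdx_succ N2 u.val hN2).1 (by rw [h1]; exact h2)
        refine ⟨u, hc, ?_⟩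
        have hlt : u.val + 1 < K * (3 + N2) := by have := w.isLt; omega
        have huw : (u + 1 : Fin _) = w := Fin.ext (by rw [fin_succ_val u hlt]; exact h1)
        rw [huw]
      · have hc := (blockIdx_succ N2 w.val hN2).1 (by rw [h1]; exact h2.symm)
        refine ⟨w, hc, ?_⟩
        have hlt : w.val + 1 < K * (3 + N2) := by have := u.isLt; omega
        have huw : (w + 1 : Fin _) = u := Fin.ext (by rw [fin_succ_val w hlt]; exact h1)
        rw [huw, Sym2.eq_swap]
    · rintro ⟨v, hv, he⟩
      have hlt : v.val + 1 < K * (3 + N2) := val_succ_lt v hv.2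
      have hval : (v + 1 : Fin _).val = v.val + 1 := fin_succ_val v hlt
      have hadj : (u.val + 1 = w.val ∨ w.val + 1 = u.val) ∧
          blockIdx 3 N2 u.val = blockIdx 3 N2 w.val := by
        have hblk : blockIdx 3 N2 v.val = blockIdx 3 N2 (v + 1 : Fin _).val := by
          rw [hval]; exact (blockIdx_succ N2 v.val hN2).2 hv
        rcases Sym2.eq_iff.1 he with ⟨rfl, rfl⟩ | ⟨rfl, rfl⟩
        · exact ⟨Or.inl hval.symm, hblk⟩
        · exact ⟨Or.inr hval.symm, hblk.symm⟩
      exact hadj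

lemma numEdges_graphG {K N2 : ℕ} [NeZero (K * (3 + N2))] (hN2 : 1 ≤ N2) :
    numEdges (graphG K 3 N2) = K * (N2 + 1) := by
  have hP0 : 0 < 3 + N2 := by omega
  rw [numEdges, edgeFin_graphG hN2, Finset.card_image_of_injOn]
  · have h := card_filter_mod K (3 + N2) hP0 (fun r => r + 1 ≠ 3 ∧ r + 1 ≠ 3 + N2)
    rw [h]
    have hneg : (Finset.range (3 + N2)).filter
        (fun r => ¬(r + 1 ≠ 3 ∧ r + 1 ≠ 3 + N2)) = {2, 2 + N2} := by
      ext r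
      simp only [Finset.mem_filter, Finset.mem_range, Finset.mem_insert, Finset.mem_singleton]
      constructor
      · rintro ⟨h1, h2⟩; push_neg at h2; omega
      · rintro (rfl | rfl) <;> constructor <;> omega
    have hcard2 : ({2, 2 + N2} : Finset ℕ).card = 2 := by
      rw [Finset.card_insert_of_notMem (by simp; omega), Finset.card_singleton]
    have htot := Finset.card_filter_add_card_filter_not
      (s := Finset.range (3 + N2)) (p := fun r => r + 1 ≠ 3 ∧ r + 1 ≠ 3 + N2)
    rw [hneg, hcard2, Finset.card_range] at htot
    have hcc : ((Finset.range (3 + N2)).filter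
        (fun r => r + 1 ≠ 3 ∧ r + 1 ≠ 3 + N2)).card = N2 + 1 := by omega
    rw [hcc]
  · intro a ha b hb hab
    simp only [Finset.coe_filter, Finset.mem_univ, true_and, Set.mem_setOf_eq] at ha hb
    have hla : a.val + 1 < K * (3 + N2) := val_succ_lt a ha.2
    have hlb : b.val + 1 < K * (3 + N2) := val_succ_lt b hb.2
    rcases Sym2.eq_iff.1 hab with ⟨h1, _⟩ | ⟨h1, h2⟩
    · exact h1
    · have e1 : a.val = (b + 1 : Fin _).val := congrArg Fin.val h1
      have e2 : (a + 1 : Fin _).val = b.val := congrArg Fin.val h2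
      rw [fin_succ_val b hlb] at e1
      rw [fin_succ_val a hla] at e2
      exact absurd (by omega : False) (fun h => h)

lemma intraEdges_graphG {K N2 : ℕ} (hN2 : 1 ≤ N2) :
    intraEdges (graphG K 3 N2) (naturalLabel 3 N2) = numEdges (graphG K 3 N2) := by
  unfold intraEdges numEdges
  congr 1
  apply Finset.filter_true_of_mem
  intro e he
  induction e using Sym2.ind with
  | _ u w =>
    simp only [edgeFin, Finset.mem_filter, Finset.mem_univ, true_and,
      SimpleGraph.mem_edgeSet, adj_graphG] at he
    intro a ha b hb
    rw [Sym2.mem_iff] at ha hb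
    have h2 := he.2
    unfold naturalLabel
    rcases ha with rfl | rfl <;> rcases hb with rfl | rfl
    · rfl
    · exact h2
    · exact h2.symm
    · rfl


lemma deg_graphG {K N2 : ℕ} (hN2 : 1 ≤ N2) (v : Fin (K * (3 + N2))) :
    deg (graphG K 3 N2) v =
      (if v.val % (3 + N2) = 0 ∨ v.val % (3 + N2) = 3 then 0 else 1)
      + (if v.val % (3 + N2) + 1 = 3 ∨ v.val % (3 + N2) + 1 = 3 + N2 then 0 else 1) := by
  have hP0 : 0 < 3 + N2 := by omega
  have hd := Nat.div_add_mod v.val (3 + N2)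
  have hr : v.val % (3 + N2) < 3 + N2 := Nat.mod_lt _ hP0
  unfold deg
  have hsplit : Finset.univ.filter (fun w => (graphG K 3 N2).Adj v w)
      = (Finset.univ.filter (fun w => (graphG K 3 N2).Adj v w ∧ w.val + 1 = v.val))
        ∪ (Finset.univ.filter (fun w => (graphG K 3 N2).Adj v w ∧ v.val + 1 = w.val)) := by
    rw [← Finset.filter_or]
    apply Finset.filter_congr
    intro w _
    simp only [adj_graphG]
    constructor
    · rintro ⟨h1 | h1, h2⟩
      · exact Or.inr ⟨⟨Or.inl h1, h2⟩, h1⟩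
      · exact Or.inl ⟨⟨Or.inr h1, h2⟩, h1⟩
    · rintro (⟨h1, _⟩ | ⟨h1, _⟩) <;> exact h1
  have hdisj : Disjoint
      (Finset.univ.filter (fun w => (graphG K 3 N2).Adj v w ∧ w.val + 1 = v.val))
      (Finset.univ.filter (fun w => (graphG K 3 N2).Adj v w ∧ v.val + 1 = w.val)) := by
    rw [Finset.disjoint_left]
    intro w hw1 hw2
    simp only [Finset.mem_filter, Finset.mem_univ, true_and] at hw1 hw2
    omega
  rw [hsplit, Finset.card_union_of_disjoint hdisj]
  congr 1
  · -- predecessor part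
    split_ifs with h
    · rw [Finset.card_eq_zero, Finset.eq_empty_iff_forall_notMem]
      intro w hw
      simp only [Finset.mem_filter, Finset.mem_univ, true_and, adj_graphG] at hw
      obtain ⟨⟨_, hb⟩, he⟩ := hw
      have hv1 : 1 ≤ v.val := by omega
      have hwv : w.val = v.val - 1 := by omega
      have hwm : w.val % (3 + N2) = if v.val % (3 + N2) = 0 then 3 + N2 - 1
          else v.val % (3 + N2) - 1 := by rw [hwv]; exact pred_mod _ _ hP0 hv1
      have hb2 : blockIdx 3 N2 w.val = blockIdx 3 N2 (w.val + 1) := by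
        rw [he]; exact hb.symm
      have hc := (blockIdx_succ N2 w.val hN2).1 hb2
      rcases h with h | h <;> rw [h] at hwm <;> simp at hwm <;> omega
    · rw [Finset.card_eq_one]
      push_neg at h
      have hv1 : 1 ≤ v.val := by omega
      refine ⟨⟨v.val - 1, by omega⟩, ?_⟩
      ext w
      simp only [Finset.mem_filter, Finset.mem_univ, true_and, adj_graphG,
        Finset.mem_singleton]
      constructor
      · rintro ⟨_, he⟩
        apply Fin.ext
        show w.val = v.val - 1
        omega
      · rintro rfl
        have hwm : (v.val - 1) % (3 + N2) = v.val % (3 + N2) - 1 := by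
          rw [pred_mod _ _ hP0 hv1, if_neg h.1]
        have hb2 : blockIdx 3 N2 (v.val - 1) = blockIdx 3 N2 (v.val - 1 + 1) :=
          (blockIdx_succ N2 _ hN2).2 (by rw [hwm]; omega)
        rw [show v.val - 1 + 1 = v.val by omega] at hb2
        refine ⟨⟨Or.inr ?_, hb2.symm⟩, ?_⟩ <;> · show v.val - 1 + 1 = v.val; omega
  · -- successor part
    split_ifs with h
    · rw [Finset.card_eq_zero, Finset.eq_empty_iff_forall_notMem]
      intro w hw
      simp only [Finset.mem_filter, Finset.mem_univ, true_and, adj_graphG] at hw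
      obtain ⟨⟨_, hb⟩, he⟩ := hw
      have hb2 : blockIdx 3 N2 v.val = blockIdx 3 N2 (v.val + 1) := by rw [he]; exact hb
      have hc := (blockIdx_succ N2 v.val hN2).1 hb2
      omega
    · rw [Finset.card_eq_one]
      push_neg at h
      refine ⟨⟨v.val + 1, val_succ_lt v h.2⟩, ?_⟩
      ext w
      simp only [Finset.mem_filter, Finset.mem_univ, true_and, adj_graphG,
        Finset.mem_singleton]
      constructor
      · rintro ⟨_, he⟩
        apply Fin.ext
        show w.val = v.val + 1
        omega
      · rintro rfl
        exact ⟨⟨Or.inl rfl, (blockIdx_succ N2 v.val hN2).2 h⟩, rfl⟩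


lemma blockIdx_lt {K N2 : ℕ} (v : Fin (K * (3 + N2))) : blockIdx 3 N2 v.val < 2 * K := by
  have hdlt : v.val / (3 + N2) < K := (Nat.div_lt_iff_lt_mul (by omega)).2 v.isLt
  unfold blockIdx
  split_ifs <;> omega

lemma image_naturalLabel {K N2 : ℕ} (hN2 : 1 ≤ N2) (hK : 1 ≤ K) :
    (Finset.univ : Finset (Fin (K * (3 + N2)))).image (naturalLabel 3 N2)
      = Finset.range (2 * K) := by
  have hP0 : 0 < 3 + N2 := by omega
  ext k
  simp only [Finset.mem_image, Finset.mem_range, Finset.mem_univ, true_and]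
  constructor
  · rintro ⟨v, rfl⟩
    exact blockIdx_lt v
  · intro hk
    have hb : (k / 2) * (3 + N2) + (k % 2) * 3 < K * (3 + N2) := by
      have h1 : (k / 2 + 1) * (3 + N2) ≤ K * (3 + N2) :=
        Nat.mul_le_mul_right _ (by omega)
      have h2 : (k / 2 + 1) * (3 + N2) = (k / 2) * (3 + N2) + (3 + N2) := by ring
      omega
    refine ⟨⟨(k / 2) * (3 + N2) + (k % 2) * 3, hb⟩, ?_⟩
    show blockIdx 3 N2 ((k / 2) * (3 + N2) + (k % 2) * 3) = k
    have hval : (k / 2) * (3 + N2) + (k % 2) * 3 = (k % 2) * 3 + (3 + N2) * (k / 2) := by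
      ring
    unfold blockIdx
    rw [hval, Nat.add_mul_div_left _ _ hP0, Nat.add_mul_mod_self_left,
      Nat.div_eq_of_lt (by omega), Nat.mod_eq_of_lt (by omega)]
    split_ifs <;> omega

lemma label_eq_iff {K N2 : ℕ} (hN2 : 1 ≤ N2) (k : ℕ) (v : Fin (K * (3 + N2))) :
    naturalLabel 3 N2 v = k ↔
      ∃ j < (if k % 2 = 0 then 3 else N2), v.val = (k / 2) * (3 + N2) + (k % 2) * 3 + j := by
  have hP0 : 0 < 3 + N2 := by omega
  have hd := Nat.div_add_mod v.val (3 + N2)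
  have hr : v.val % (3 + N2) < 3 + N2 := Nat.mod_lt _ hP0
  have hcomm : (v.val / (3 + N2)) * (3 + N2) = (3 + N2) * (v.val / (3 + N2)) := by ring
  show blockIdx 3 N2 v.val = k ↔ _
  unfold blockIdx
  constructor
  · intro h
    by_cases hind : v.val % (3 + N2) < 3
    · rw [if_pos hind] at h
      have hk2 : k % 2 = 0 := by omega
      have hq : k / 2 = v.val / (3 + N2) := by omega
      refine ⟨v.val % (3 + N2), by rw [if_pos hk2]; omega, ?_⟩
      rw [hk2, hq]
      omega
    · rw [if_neg hind] at h
      have hk2 : k % 2 = 1 := by omega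
      have hq : k / 2 = v.val / (3 + N2) := by omega
      refine ⟨v.val % (3 + N2) - 3, by rw [if_neg (by omega : ¬ k % 2 = 0)]; omega, ?_⟩
      rw [hk2, hq]
      omega
  · rintro ⟨j, hj, hval⟩ -- MARK
    have hpar : k % 2 = 0 ∨ k % 2 = 1 := by omega
    have hlt : (k % 2) * 3 + j < 3 + N2 := by
      rcases hpar with h0 | h0
      · rw [if_pos h0] at hj; omega
      · rw [if_neg (by omega : ¬ k % 2 = 0)] at hj; omega
    have hval2 : v.val = ((k % 2) * 3 + j) + (3 + N2) * (k / 2) := by rw [hval]; ring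
    have hdiv : v.val / (3 + N2) = k / 2 := by
      rw [hval2, Nat.add_mul_div_left _ _ hP0, Nat.div_eq_of_lt hlt]; omega
    have hmod : v.val % (3 + N2) = (k % 2) * 3 + j := by
      rw [hval2, Nat.add_mul_mod_self_left, Nat.mod_eq_of_lt hlt]
    rw [hdiv, hmod]
    rcases hpar with h0 | h0
    · rw [if_pos h0] at hj
      rw [if_pos (by omega : (k % 2) * 3 + j < 3)]
      omega
    · rw [if_neg (by omega : ¬ (k % 2) * 3 + j < 3)]
      omega

lemma sum_ite_point (N a : ℕ) (ha : a < N) :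
    (∑ j ∈ Finset.range N, if j = a then (0 : ℕ) else 1) = N - 1 := by
  have h1 : (∑ j ∈ Finset.range N,
      ((if j = a then (0 : ℕ) else 1) + (if j = a then 1 else 0))) = N := by
    calc (∑ j ∈ Finset.range N,
        ((if j = a then (0 : ℕ) else 1) + (if j = a then 1 else 0)))
        = ∑ _j ∈ Finset.range N, 1 := Finset.sum_congr rfl (fun j _ => by split_ifs <;> rfl)
      _ = N := by simp
  have h2 : (∑ j ∈ Finset.range N, (if j = a then (1 : ℕ) else 0)) = 1 := by
    rw [Finset.sum_ite_eq' (Finset.range N) a (fun _ => (1 : ℕ))]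
    simp [ha]
  rw [Finset.sum_add_distrib, h2] at h1
  omega

lemma clusterDeg_graphG {K N2 : ℕ} (hN2 : 1 ≤ N2) (hK : 1 ≤ K) (k : ℕ) (hk : k < 2 * K) :
    clusterDeg (graphG K 3 N2) (naturalLabel 3 N2) k
      = if k % 2 = 0 then 4 else 2 * N2 - 2 := by
  have hP0 : 0 < 3 + N2 := by omega
  have hn0 : 0 < K * (3 + N2) := Nat.mul_pos (by omega) hP0
  have hpar : k % 2 = 0 ∨ k % 2 = 1 := by omega
  obtain ⟨s, hs⟩ : ∃ s, (if k % 2 = 0 then 3 else N2) = s := ⟨_, rfl⟩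
  obtain ⟨base, hbase⟩ : ∃ b, (k / 2) * (3 + N2) + (k % 2) * 3 = b := ⟨_, rfl⟩
  have hsb : (k % 2) * 3 + s ≤ 3 + N2 := by
    rcases hpar with h0 | h0
    · rw [← hs, if_pos h0]; omega
    · rw [← hs, if_neg (by omega : ¬ k % 2 = 0)]; omega
  have hbs : base + s ≤ K * (3 + N2) := by
    have h1 : (k / 2 + 1) * (3 + N2) ≤ K * (3 + N2) := Nat.mul_le_mul_right _ (by omega)
    have h2 : (k / 2 + 1) * (3 + N2) = (k / 2) * (3 + N2) + (3 + N2) := by ring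
    omega
  set g : ℕ → Fin (K * (3 + N2)) := fun j => ⟨(base + j) % (K * (3 + N2)), Nat.mod_lt _ hn0⟩
    with hg
  have hgval : ∀ j < s, (g j).val = base + j := fun j hj => Nat.mod_eq_of_lt (by omega)
  have hset : Finset.univ.filter (fun v => naturalLabel 3 N2 v = k)
      = (Finset.range s).image g := by
    ext v
    simp only [Finset.mem_filter, Finset.mem_univ, true_and, Finset.mem_image,
      Finset.mem_range]
    rw [label_eq_iff hN2 k v, hs, hbase]
    constructor
    · rintro ⟨j, hj, hv⟩
      exact ⟨j, hj, Fin.ext (by rw [hgval j hj]; omega)⟩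
    · rintro ⟨j, hj, rfl⟩
      exact ⟨j, hj, hgval j hj⟩
  unfold clusterDeg
  rw [hset, Finset.sum_image (fun j hj j' hj' hjj' => by
    have e1 := hgval j (Finset.mem_range.1 hj)
    have e2 := hgval j' (Finset.mem_range.1 hj')
    have := congrArg Fin.val hjj'
    omega)]
  have hdeg : ∀ j ∈ Finset.range s, deg (graphG K 3 N2) (g j) =
      (if (k % 2) * 3 + j = 0 ∨ (k % 2) * 3 + j = 3 then 0 else 1)
      + (if (k % 2) * 3 + j + 1 = 3 ∨ (k % 2) * 3 + j + 1 = 3 + N2 then 0 else 1) := by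
    intro j hj
    have hjs := Finset.mem_range.1 hj
    have hmod : (g j).val % (3 + N2) = (k % 2) * 3 + j := by
      have : (g j).val = ((k % 2) * 3 + j) + (3 + N2) * (k / 2) := by
        rw [hgval j hjs, ← hbase]; ring
      rw [this, Nat.add_mul_mod_self_left, Nat.mod_eq_of_lt (by omega)]
    rw [deg_graphG hN2, hmod]
  rw [Finset.sum_congr rfl hdeg]
  rcases hpar with h0 | h0
  · have hs3 : s = 3 := by rw [← hs, if_pos h0]
    rw [hs3, if_pos h0, h0]
    rw [Finset.sum_range_succ, Finset.sum_range_succ, Finset.sum_range_succ,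
      Finset.sum_range_zero]
    norm_num
    split_ifs <;> omega
  · have hsN : s = N2 := by rw [← hs, if_neg (by omega : ¬ k % 2 = 0)]
    rw [hsN, if_neg (by omega), h0]
    have hcongr : ∀ j ∈ Finset.range N2,
        ((if 1 * 3 + j = 0 ∨ 1 * 3 + j = 3 then (0:ℕ) else 1)
          + (if 1 * 3 + j + 1 = 3 ∨ 1 * 3 + j + 1 = 3 + N2 then 0 else 1))
        = (if j = 0 then 0 else 1) + (if j = N2 - 1 then 0 else 1) := by
      intro j hj
      have := Finset.mem_range.1 hj
      split_ifs <;> omega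
    rw [Finset.sum_congr rfl hcongr, Finset.sum_add_distrib,
      sum_ite_point N2 0 (by omega), sum_ite_point N2 (N2 - 1) (by omega)]
    omega


lemma sum_range_two_mul (K : ℕ) (f : ℕ → ℝ) :
    ∑ k ∈ Finset.range (2 * K), f k
      = ∑ q ∈ Finset.range K, (f (2 * q) + f (2 * q + 1)) := by
  induction K with
  | zero => simp
  | succ n ih =>
    rw [Finset.sum_range_succ, ← ih, show 2 * (n + 1) = 2 * n + 1 + 1 by ring,
      Finset.sum_range_succ, Finset.sum_range_succ]
    ring

lemma Q0_graphG {K N2 : ℕ} (hN2 : 1 ≤ N2) (hK : 1 ≤ K) :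
    Q0 (graphG K 3 N2) (naturalLabel 3 N2) =
      (K : ℝ) * ((4 / (2 * ((K : ℝ) * ((N2 : ℝ) + 1)))) ^ 2
        + ((2 * (N2 : ℝ) - 2) / (2 * ((K : ℝ) * ((N2 : ℝ) + 1)))) ^ 2) := by
  haveI : NeZero (K * (3 + N2)) := ⟨Nat.mul_ne_zero (by omega) (by omega)⟩
  unfold Q0
  rw [image_naturalLabel hN2 hK, numEdges_graphG hN2, sum_range_two_mul]
  have h1 : ∀ q ∈ Finset.range K,
      (((clusterDeg (graphG K 3 N2) (naturalLabel 3 N2) (2 * q) : ℝ)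
          / (2 * ((K * (N2 + 1) : ℕ) : ℝ))) ^ 2
        + ((clusterDeg (graphG K 3 N2) (naturalLabel 3 N2) (2 * q + 1) : ℝ)
          / (2 * ((K * (N2 + 1) : ℕ) : ℝ))) ^ 2)
      = (4 / (2 * ((K : ℝ) * ((N2 : ℝ) + 1)))) ^ 2
        + ((2 * (N2 : ℝ) - 2) / (2 * ((K : ℝ) * ((N2 : ℝ) + 1)))) ^ 2 := by
    intro q hq
    have hqK := Finset.mem_range.1 hq
    rw [clusterDeg_graphG hN2 hK (2 * q) (by omega),
      clusterDeg_graphG hN2 hK (2 * q + 1) (by omega),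
      if_pos (by omega), if_neg (by omega)]
    have hc : ((2 * N2 - 2 : ℕ) : ℝ) = 2 * (N2 : ℝ) - 2 := by
      rw [Nat.cast_sub (by omega)]; push_cast; ring
    rw [hc]
    push_cast
    ring
  rw [Finset.sum_congr rfl h1, Finset.sum_const, Finset.card_range, nsmul_eq_mul]

lemma QN_graphG {K N2 : ℕ} (hN2 : 1 ≤ N2) (hK : 1 ≤ K) :
    QN (graphG K 3 N2) (naturalLabel 3 N2)
      = 1 - (4 + ((N2 : ℝ) - 1) ^ 2) / ((K : ℝ) * (1 + (N2 : ℝ)) ^ 2) := by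
  haveI : NeZero (K * (3 + N2)) := ⟨Nat.mul_ne_zero (by omega) (by omega)⟩
  unfold QN Qf
  rw [intraEdges_graphG hN2, numEdges_graphG hN2, Q0_graphG hN2 hK]
  have hm : ((K * (N2 + 1) : ℕ) : ℝ) ≠ 0 :=
    Nat.cast_ne_zero.2 (Nat.mul_ne_zero (by omega) (by omega))
  rw [div_self hm]
  have hKr : (K : ℝ) ≠ 0 := Nat.cast_ne_zero.2 (by omega)
  have hN2r : (1 : ℝ) + (N2 : ℝ) ≠ 0 := by positivity
  field_simp
  ring

end Helpers

/-- with `N₁ = 3`, `N₂ = x²K`,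
`Q_N(𝐕_{K,3,x²K}, G_{K,3,x²K}) = 1 − (4 + (x²K−1)²)/(K(1 + x²K)²)`, which converges
to `1 − 1/K` as `x → ∞`. -/
theorem statement11 (K : ℕ) (hK : 1 ≤ K) :
    (∀ x : ℕ, 1 ≤ x →
      QN (graphG K 3 (x ^ 2 * K)) (naturalLabel 3 (x ^ 2 * K)) =
        1 - (4 + ((x : ℝ) ^ 2 * (K : ℝ) - 1) ^ 2) /
            ((K : ℝ) * (1 + (x : ℝ) ^ 2 * (K : ℝ)) ^ 2)) ∧
    Tendsto (fun x : ℕ => QN (graphG K 3 (x ^ 2 * K)) (naturalLabel 3 (x ^ 2 * K)))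
      atTop (nhds (1 - 1 / (K : ℝ))) := by
  have hmain : ∀ x : ℕ, 1 ≤ x →
      QN (graphG K 3 (x ^ 2 * K)) (naturalLabel 3 (x ^ 2 * K)) =
        1 - (4 + ((x : ℝ) ^ 2 * (K : ℝ) - 1) ^ 2) /
            ((K : ℝ) * (1 + (x : ℝ) ^ 2 * (K : ℝ)) ^ 2) := by
    intro x hx
    have hx2 : 1 ≤ x ^ 2 := Nat.one_le_pow 2 x (by omega)
    have hN2 : 1 ≤ x ^ 2 * K := by simpa using Nat.mul_le_mul hx2 hK
    rw [QN_graphG hN2 hK]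
    push_cast
    ring
  refine ⟨hmain, ?_⟩
  have hKr : (K : ℝ) ≠ 0 := Nat.cast_ne_zero.2 (by omega)
  have hKpos : (0 : ℝ) < (K : ℝ) := Nat.cast_pos.2 (by omega)
  have hx2 : Tendsto (fun x : ℕ => ((x : ℝ)) ^ 2) atTop atTop :=
    (tendsto_pow_atTop (by norm_num : (2 : ℕ) ≠ 0)).comp tendsto_natCast_atTop_atTop
  have hx4 : Tendsto (fun x : ℕ => ((x : ℝ)) ^ 4) atTop atTop :=
    (tendsto_pow_atTop (by norm_num : (4 : ℕ) ≠ 0)).comp tendsto_natCast_atTop_atTop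
  have hinv2 : Tendsto (fun x : ℕ => 1 / ((x : ℝ)) ^ 2) atTop (nhds 0) := by
    simpa [one_div, Pi.inv_def] using hx2.inv_tendsto_atTop
  have hinv4 : Tendsto (fun x : ℕ => 1 / ((x : ℝ)) ^ 4) atTop (nhds 0) := by
    simpa [one_div, Pi.inv_def] using hx4.inv_tendsto_atTop
  have hnum : Tendsto (fun x : ℕ => 4 / ((x : ℝ)) ^ 4 + ((K : ℝ) - 1 / ((x : ℝ)) ^ 2) ^ 2)
      atTop (nhds (4 * 0 + ((K : ℝ) - 0) ^ 2)) := by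
    apply Tendsto.add
    · have heq : (fun x : ℕ => 4 / ((x : ℝ)) ^ 4) = fun x : ℕ => 4 * (1 / ((x : ℝ)) ^ 4) := by
        funext x; ring
      rw [heq]
      exact hinv4.const_mul 4
    · exact (tendsto_const_nhds.sub hinv2).pow 2
  have hden : Tendsto (fun x : ℕ => (K : ℝ) * (1 / ((x : ℝ)) ^ 2 + (K : ℝ)) ^ 2)
      atTop (nhds ((K : ℝ) * (0 + (K : ℝ)) ^ 2)) :=
    ((hinv2.add tendsto_const_nhds).pow 2).const_mul _
  have hden0 : (K : ℝ) * (0 + (K : ℝ)) ^ 2 ≠ 0 := by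
    simp only [zero_add]; positivity
  have hratio := hnum.div hden hden0
  have hval : (4 * 0 + ((K : ℝ) - 0) ^ 2) / ((K : ℝ) * (0 + (K : ℝ)) ^ 2) = 1 / (K : ℝ) := by
    field_simp
    ring
  rw [hval] at hratio
  have hfin : Tendsto (fun x : ℕ => 1 - (4 + ((x : ℝ) ^ 2 * (K : ℝ) - 1) ^ 2) /
      ((K : ℝ) * (1 + (x : ℝ) ^ 2 * (K : ℝ)) ^ 2)) atTop (nhds (1 - 1 / (K : ℝ))) := by
    apply Tendsto.const_sub
    apply Filter.Tendsto.congr' ?_ hratio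
    filter_upwards [eventually_ge_atTop 1] with x hx
    have hxr : ((x : ℝ)) ≠ 0 := Nat.cast_ne_zero.2 (by omega)
    rw [Pi.div_apply]
    field_simp
  exact Filter.Tendsto.congr'
    ((eventually_ge_atTop 1).mono fun x hx => (hmain x hx).symm) hfin
end
end

section
/- For all integers K ≥ 1 and N₁,N₂ ≥ 5, the Newman modularity of the natural clustering of H_{K,N₁,N₂} satisfies Q_N(𝐕_{K,N₁,N₂}, H_{K,N₁,N₂}) < 1 − K((4N₁−8)² + (4N₂−8)²)/(4K(N₁+N₂−2))². -/
open scoped Classical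

noncomputable section

open BadComm


section Helpers

variable {K N1 N2 : ℕ}

lemma blockIdx_eval (h1 : 5 ≤ N1) (h2 : 5 ≤ N2) (v q s : ℕ)
    (hv : v = q * (N1 + N2) + s) (hs : s < N1 + N2) :
    blockIdx N1 N2 v = 2 * q + (if s < N1 then 0 else 1) := by
  have hD : 0 < N1 + N2 := by omega
  have h : v = s + (N1 + N2) * q := by rw [hv]; ring
  rw [h]
  unfold blockIdx
  rw [Nat.add_mul_div_left _ _ hD, Nat.add_mul_mod_self_left,
    Nat.div_eq_of_lt hs, Nat.mod_eq_of_lt hs]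
  simp

lemma handshake (K N1 N2 : ℕ) :
    ∑ v : Fin (K * (N1 + N2)), deg (graphH K N1 N2) v = 2 * numEdges (graphH K N1 N2) := by
  classical
  have hdr : DecidableRel (graphH K N1 N2).Adj := Classical.decRel _
  have h1 : numEdges (graphH K N1 N2) = (graphH K N1 N2).edgeFinset.card := by
    have he : edgeFin (graphH K N1 N2) = (graphH K N1 N2).edgeFinset := by
      ext e
      simp [edgeFin, SimpleGraph.mem_edgeFinset]
    rw [numEdges, he]
  rw [h1, ← SimpleGraph.sum_degrees_eq_twice_card_edges]
  apply Finset.sum_congr rfl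
  intro v _
  unfold deg SimpleGraph.degree
  refine congrArg Finset.card ?_
  ext w
  simp [SimpleGraph.mem_neighborFinset]

lemma deg_le_of {n : ℕ} (G : SimpleGraph (Fin n)) (v : Fin n) (T : Finset ℕ)
    (h : ∀ w, G.Adj v w → w.val ∈ T) : deg G v ≤ T.card := by
  refine Finset.card_le_card_of_injOn Fin.val (fun w hw => ?_) (Fin.val_injective.injOn)
  exact h w (Finset.mem_filter.mp hw).2

lemma deg_ge_of {n : ℕ} (G : SimpleGraph (Fin n)) (v : Fin n) (s : Finset (Fin n))
    (h : ∀ w ∈ s, G.Adj v w) : s.card ≤ deg G v :=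
  Finset.card_le_card fun w hw => Finset.mem_filter.mpr ⟨Finset.mem_univ _, h w hw⟩

lemma card3 (a b c : ℕ) : ({a, b, c} : Finset ℕ).card ≤ 3 := by
  have h1 := Finset.card_insert_le a ({b, c} : Finset ℕ)
  have h2 := Finset.card_insert_le b ({c} : Finset ℕ)
  simp only [Finset.card_singleton] at *
  omega

lemma card4 (a b c d : ℕ) : ({a, b, c, d} : Finset ℕ).card ≤ 4 := by
  have h1 := Finset.card_insert_le a ({b, c, d} : Finset ℕ)
  have h2 := card3 b c d
  omega

end Helpers

section DegBounds

variable {K N1 N2 : ℕ}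

lemma adjH {v w : Fin (K * (N1 + N2))} (h : (graphH K N1 N2).Adj v w) :
    (v.val + 1 = w.val ∨ w.val + 1 = v.val) ∨
    ((v.val + 2 = w.val ∨ w.val + 2 = v.val) ∧
      blockIdx N1 N2 v.val = blockIdx N1 N2 w.val) := h

lemma adjH' {v w : Fin (K * (N1 + N2))}
    (h : (v.val + 1 = w.val ∨ w.val + 1 = v.val) ∨
      ((v.val + 2 = w.val ∨ w.val + 2 = v.val) ∧
        blockIdx N1 N2 v.val = blockIdx N1 N2 w.val)) :
    (graphH K N1 N2).Adj v w := h

lemma deg_le_four (v : Fin (K * (N1 + N2))) : deg (graphH K N1 N2) v ≤ 4 := by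
  refine le_trans (deg_le_of _ v ({v.val - 2, v.val - 1, v.val + 1, v.val + 2} : Finset ℕ) ?_)
    (card4 _ _ _ _)
  intro w hw
  obtain ((h | h) | ⟨(h | h), -⟩) := adjH hw <;> simp <;> omega

lemma deg_le_three_A (v : Fin (K * (N1 + N2)))
    (h : ∀ w : ℕ, w + 2 = v.val → blockIdx N1 N2 w ≠ blockIdx N1 N2 v.val) :
    deg (graphH K N1 N2) v ≤ 3 := by
  refine le_trans (deg_le_of _ v ({v.val - 1, v.val + 1, v.val + 2} : Finset ℕ) ?_)
    (card3 _ _ _)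
  intro w hw
  obtain ((h' | h') | ⟨(h' | h'), hb⟩) := adjH hw
  · simp; omega
  · simp; omega
  · simp; omega
  · exact absurd hb.symm (h w.val h')

lemma deg_le_three_B (v : Fin (K * (N1 + N2)))
    (h : blockIdx N1 N2 (v.val + 2) ≠ blockIdx N1 N2 v.val) :
    deg (graphH K N1 N2) v ≤ 3 := by
  refine le_trans (deg_le_of _ v ({v.val - 2, v.val - 1, v.val + 1} : Finset ℕ) ?_)
    (card3 _ _ _)
  intro w hw
  obtain ((h' | h') | ⟨(h' | h'), hb⟩) := adjH hw
  · simp; omega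
  · simp; omega
  · exact absurd (h' ▸ hb.symm) h
  · simp; omega

lemma deg_le_two_zero (v : Fin (K * (N1 + N2))) (hv : v.val = 0) :
    deg (graphH K N1 N2) v ≤ 2 := by
  have hc : ({v.val + 1, v.val + 2} : Finset ℕ).card ≤ 2 := by
    have := Finset.card_insert_le (v.val + 1) ({v.val + 2} : Finset ℕ)
    simp only [Finset.card_singleton] at this
    omega
  refine le_trans (deg_le_of _ v ({v.val + 1, v.val + 2} : Finset ℕ) ?_) hc
  intro w hw
  obtain ((h' | h') | ⟨(h' | h'), -⟩) := adjH hw <;> simp <;> omega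

lemma deg_ge_two (hK : 1 ≤ K) (h1 : 5 ≤ N1) (h2 : 5 ≤ N2) (v : Fin (K * (N1 + N2))) :
    2 ≤ deg (graphH K N1 N2) v := by
  have hn10 : 10 ≤ K * (N1 + N2) := by
    calc 10 ≤ 1 * (N1 + N2) := by omega
    _ ≤ K * (N1 + N2) := Nat.mul_le_mul_right _ hK
  have hvn : v.val < K * (N1 + N2) := v.isLt
  have pair_card : ∀ (a b : Fin (K * (N1 + N2))), a.val ≠ b.val →
      2 ≤ ({a, b} : Finset (Fin (K * (N1 + N2)))).card := by
    intro a b hab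
    rw [Finset.card_insert_of_notMem (by first | omega | (simp only [Finset.mem_insert, Finset.mem_singleton, Fin.val_mk, Fin.mk.injEq, ne_eq, not_or] <;> omega)), Finset.card_singleton]
  rcases Nat.eq_zero_or_pos v.val with h0 | hpos
  · -- v = 0 : neighbors 1 and 2
    refine le_trans (pair_card ⟨1, by omega⟩ ⟨2, by omega⟩ (by first | omega | (simp only [Finset.mem_insert, Finset.mem_singleton, Fin.val_mk, Fin.mk.injEq, ne_eq, not_or] <;> omega))) (deg_ge_of _ v _ ?_)
    intro w hw
    simp only [Finset.mem_insert, Finset.mem_singleton] at hw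
    rcases hw with rfl | rfl
    · exact adjH' (Or.inl (Or.inl (by first | omega | (simp only [Finset.mem_insert, Finset.mem_singleton, Fin.val_mk, Fin.mk.injEq, ne_eq, not_or] <;> omega))))
    · refine adjH' (Or.inr ⟨Or.inl (by first | omega | (simp only [Finset.mem_insert, Finset.mem_singleton, Fin.val_mk, Fin.mk.injEq, ne_eq, not_or] <;> omega)), ?_⟩)
      rw [blockIdx_eval h1 h2 v.val 0 0 (by omega) (by omega),
        blockIdx_eval h1 h2 2 0 2 (by omega) (by omega)]
      rw [if_pos (by omega), if_pos (by omega)]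
  · rcases Nat.lt_or_ge v.val (K * (N1 + N2) - 1) with hlt | hge
    · -- interior of path: v-1 and v+1
      refine le_trans (pair_card ⟨v.val - 1, by omega⟩ ⟨v.val + 1, by omega⟩ (by first | omega | (simp only [Finset.mem_insert, Finset.mem_singleton, Fin.val_mk, Fin.mk.injEq, ne_eq, not_or] <;> omega)))
        (deg_ge_of _ v _ ?_)
      intro w hw
      simp only [Finset.mem_insert, Finset.mem_singleton] at hw
      rcases hw with rfl | rfl
      · exact adjH' (Or.inl (Or.inr (by first | omega | (simp only [Finset.mem_insert, Finset.mem_singleton, Fin.val_mk, Fin.mk.injEq, ne_eq, not_or] <;> omega))))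
      · exact adjH' (Or.inl (Or.inl (by first | omega | (simp only [Finset.mem_insert, Finset.mem_singleton, Fin.val_mk, Fin.mk.injEq, ne_eq, not_or] <;> omega))))
    · -- v = n - 1 : neighbors n-2, n-3
      have hv : v.val = K * (N1 + N2) - 1 := by omega
      obtain ⟨K', rfl⟩ : ∃ K', K = K' + 1 := ⟨K - 1, by omega⟩
      have hnK : (K' + 1) * (N1 + N2) = K' * (N1 + N2) + (N1 + N2) := by ring
      refine le_trans (pair_card ⟨(K' + 1) * (N1 + N2) - 2, by omega⟩
        ⟨(K' + 1) * (N1 + N2) - 3, by omega⟩ (by first | omega | (simp only [Finset.mem_insert, Finset.mem_singleton, Fin.val_mk, Fin.mk.injEq, ne_eq, not_or] <;> omega)))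
        (deg_ge_of _ v _ ?_)
      intro w hw
      simp only [Finset.mem_insert, Finset.mem_singleton] at hw
      rcases hw with rfl | rfl
      · exact adjH' (Or.inl (Or.inr (by first | omega | (simp only [Finset.mem_insert, Finset.mem_singleton, Fin.val_mk, Fin.mk.injEq, ne_eq, not_or] <;> omega))))
      · refine adjH' (Or.inr ⟨Or.inr (by first | omega | (simp only [Finset.mem_insert, Finset.mem_singleton, Fin.val_mk, Fin.mk.injEq, ne_eq, not_or] <;> omega)), ?_⟩)
        rw [blockIdx_eval h1 h2 v.val K' (N1 + N2 - 1) (by omega) (by omega),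
          blockIdx_eval h1 h2 ((K' + 1) * (N1 + N2) - 3) K' (N1 + N2 - 3) (by omega) (by omega)]
        rw [if_neg (by omega), if_neg (by omega)]

lemma deg_ge_four (h1 : 5 ≤ N1) (h2 : 5 ≤ N2) (v : Fin (K * (N1 + N2))) (q r : ℕ)
    (hq : q < K) (hv : v.val = q * (N1 + N2) + r)
    (hr : (2 ≤ r ∧ r + 3 ≤ N1) ∨ (N1 + 2 ≤ r ∧ r + 3 ≤ N1 + N2)) :
    4 ≤ deg (graphH K N1 N2) v := by
  have hmul : (q + 1) * (N1 + N2) ≤ K * (N1 + N2) := Nat.mul_le_mul_right _ (by omega)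
  have hmul2 : (q + 1) * (N1 + N2) = q * (N1 + N2) + (N1 + N2) := by ring
  have hv2 : v.val + 2 < K * (N1 + N2) := by omega
  have hv2' : 2 ≤ v.val := by omega
  have hbm : blockIdx N1 N2 v.val = 2 * q + (if r < N1 then 0 else 1) :=
    blockIdx_eval h1 h2 v.val q r hv (by omega)
  refine le_trans ?_ (deg_ge_of _ v
    ({⟨v.val - 2, by omega⟩, ⟨v.val - 1, by omega⟩, ⟨v.val + 1, by omega⟩,
      ⟨v.val + 2, by omega⟩} : Finset (Fin (K * (N1 + N2)))) ?_)
  · rw [Finset.card_insert_of_notMem (by first | omega | (simp only [Finset.mem_insert, Finset.mem_singleton, Fin.val_mk, Fin.mk.injEq, ne_eq, not_or] <;> omega)),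
      Finset.card_insert_of_notMem (by first | omega | (simp only [Finset.mem_insert, Finset.mem_singleton, Fin.val_mk, Fin.mk.injEq, ne_eq, not_or] <;> omega)),
      Finset.card_insert_of_notMem (by first | omega | (simp only [Finset.mem_insert, Finset.mem_singleton, Fin.val_mk, Fin.mk.injEq, ne_eq, not_or] <;> omega)),
      Finset.card_singleton]
  · intro w hw
    simp only [Finset.mem_insert, Finset.mem_singleton] at hw
    rcases hw with rfl | rfl | rfl | rfl
    · refine adjH' (Or.inr ⟨Or.inr (by first | omega | (simp only [Finset.mem_insert, Finset.mem_singleton, Fin.val_mk, Fin.mk.injEq, ne_eq, not_or] <;> omega)), ?_⟩)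
      rw [hbm, blockIdx_eval h1 h2 (v.val - 2) q (r - 2) (by omega) (by omega)]
      rcases hr with ⟨ha, hb⟩ | ⟨ha, hb⟩
      · rw [if_pos (by omega), if_pos (by omega)]
      · rw [if_neg (by omega), if_neg (by omega)]
    · exact adjH' (Or.inl (Or.inr (by first | omega | (simp only [Finset.mem_insert, Finset.mem_singleton, Fin.val_mk, Fin.mk.injEq, ne_eq, not_or] <;> omega))))
    · exact adjH' (Or.inl (Or.inl (by first | omega | (simp only [Finset.mem_insert, Finset.mem_singleton, Fin.val_mk, Fin.mk.injEq, ne_eq, not_or] <;> omega))))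
    · refine adjH' (Or.inr ⟨Or.inl (by first | omega | (simp only [Finset.mem_insert, Finset.mem_singleton, Fin.val_mk, Fin.mk.injEq, ne_eq, not_or] <;> omega)), ?_⟩)
      rw [hbm, blockIdx_eval h1 h2 (v.val + 2) q (r + 2) (by omega) (by omega)]
      rcases hr with ⟨ha, hb⟩ | ⟨ha, hb⟩
      · rw [if_pos (by omega), if_pos (by omega)]
      · rw [if_neg (by omega), if_neg (by omega)]

end DegBounds

section ClusterBounds

variable {K N1 N2 : ℕ}

lemma clusterDeg_ge_aux (hK : 1 ≤ K) (h1 : 5 ≤ N1) (h2 : 5 ≤ N2) (k a N : ℕ)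
    (hN : 5 ≤ N) (han : a + N ≤ K * (N1 + N2))
    (hmem : ∀ i < N, blockIdx N1 N2 (a + i) = k)
    (hint : ∀ i, 2 ≤ i → i + 3 ≤ N → ∀ v : Fin (K * (N1 + N2)), v.val = a + i →
      4 ≤ deg (graphH K N1 N2) v) :
    4 * N ≤ clusterDeg (graphH K N1 N2) (naturalLabel N1 N2) k + 8 := by
  classical
  have hn0 : 0 < K * (N1 + N2) := by omega
  set G := graphH K N1 N2 with hG
  set B : Finset (Fin (K * (N1 + N2))) :=
    Finset.univ.filter (fun v => naturalLabel N1 N2 v = k) with hB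
  have hcd : clusterDeg G (naturalLabel N1 N2) k = ∑ v ∈ B, deg G v := rfl
  let f : ℕ → Fin (K * (N1 + N2)) := fun i => ⟨(a + i) % (K * (N1 + N2)), Nat.mod_lt _ hn0⟩
  have hfval : ∀ i < N, (f i).val = a + i := by
    intro i hi
    simp only [f]
    exact Nat.mod_eq_of_lt (by omega)
  have hfB : ∀ i < N, f i ∈ B := by
    intro i hi
    simp only [hB, Finset.mem_filter, Finset.mem_univ, true_and]
    show blockIdx N1 N2 (f i).val = k
    rw [hfval i hi]
    exact hmem i hi
  have hinj : Set.InjOn f (Finset.range N) := by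
    intro i hi j hj hij
    have := congrArg Fin.val hij
    rw [hfval i (Finset.mem_range.mp hi), hfval j (Finset.mem_range.mp hj)] at this
    omega
  set I : Finset (Fin (K * (N1 + N2))) := (Finset.range (N - 4)).image (fun i => f (2 + i))
    with hI
  have hIB : I ⊆ B := by
    intro x hx
    obtain ⟨i, hi, rfl⟩ := Finset.mem_image.mp hx
    exact hfB _ (by simp at hi; omega)
  have hIcard : I.card = N - 4 := by
    rw [hI, Finset.card_image_of_injOn, Finset.card_range]
    intro i hi j hj hij
    simp only [Finset.coe_range, Set.mem_Iio] at hi hj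
    have := hinj (by simp; omega : (2 + i : ℕ) ∈ (Finset.range N : Set ℕ))
      (by simp; omega : (2 + j : ℕ) ∈ (Finset.range N : Set ℕ)) hij
    omega
  have hBcard : N ≤ B.card := by
    have : (Finset.range N).image f ⊆ B := by
      intro x hx
      obtain ⟨i, hi, rfl⟩ := Finset.mem_image.mp hx
      exact hfB _ (Finset.mem_range.mp hi)
    calc N = ((Finset.range N).image f).card := by
          rw [Finset.card_image_of_injOn hinj, Finset.card_range]
      _ ≤ B.card := Finset.card_le_card this
  have hsplit : ∑ v ∈ B \ I, deg G v + ∑ v ∈ I, deg G v = ∑ v ∈ B, deg G v :=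
    Finset.sum_sdiff hIB
  have hIsum : I.card * 4 ≤ ∑ v ∈ I, deg G v := by
    rw [← Finset.sum_const_nat (m := 4) (fun x _ => rfl)]
    apply Finset.sum_le_sum
    intro x hx
    obtain ⟨i, hi, rfl⟩ := Finset.mem_image.mp hx
    simp only [Finset.mem_range] at hi
    exact hint (2 + i) (by omega) (by omega) _ (hfval _ (by omega))
  have hDsum : (B \ I).card * 2 ≤ ∑ v ∈ B \ I, deg G v := by
    rw [← Finset.sum_const_nat (m := 2) (fun x _ => rfl)]
    exact Finset.sum_le_sum (fun x _ => deg_ge_two hK h1 h2 x)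
  have hsd : (B \ I).card = B.card - I.card := Finset.card_sdiff_of_subset hIB
  omega

lemma clusterDeg_ge (hK : 1 ≤ K) (h1 : 5 ≤ N1) (h2 : 5 ≤ N2) (q b : ℕ)
    (hq : q < K) (hb : b ≤ 1) :
    4 * (if b = 0 then N1 else N2) ≤
      clusterDeg (graphH K N1 N2) (naturalLabel N1 N2) (2 * q + b) + 8 := by
  have hmul : (q + 1) * (N1 + N2) ≤ K * (N1 + N2) := Nat.mul_le_mul_right _ (by omega)
  have hmul2 : (q + 1) * (N1 + N2) = q * (N1 + N2) + (N1 + N2) := by ring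
  rcases Nat.eq_zero_or_pos b with rfl | hb1
  · rw [if_pos rfl]
    apply clusterDeg_ge_aux hK h1 h2 (2 * q + 0) (q * (N1 + N2)) N1 h1 (by omega)
    · intro i hi
      rw [blockIdx_eval h1 h2 _ q i rfl (by omega), if_pos (by omega)]
    · intro i hi2 hi3 v hv
      exact deg_ge_four h1 h2 v q i hq (by omega) (Or.inl ⟨hi2, by omega⟩)
  · have hb0 : b = 1 := by omega
    subst hb0
    rw [if_neg (by omega)]
    apply clusterDeg_ge_aux hK h1 h2 (2 * q + 1) (q * (N1 + N2) + N1) N2 h2 (by omega)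
    · intro i hi
      rw [blockIdx_eval h1 h2 _ q (N1 + i) (by omega) (by omega), if_neg (by omega)]
    · intro i hi2 hi3 v hv
      exact deg_ge_four h1 h2 v q (N1 + i) hq (by omega) (Or.inr ⟨by omega, by omega⟩)

end ClusterBounds

section TotalDeg

variable {K N1 N2 : ℕ}

/-- offsets of the 8 special positions inside a pair of blocks -/
def off8 (N1 N2 j : ℕ) : ℕ :=
  if j = 0 then 0 else if j = 1 then 1 else if j = 2 then N1 - 2 else if j = 3 then N1 - 1
  else if j = 4 then N1 else if j = 5 then N1 + 1 else if j = 6 then N1 + N2 - 2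
  else N1 + N2 - 1

lemma off8_lt (h1 : 5 ≤ N1) (h2 : 5 ≤ N2) (j : ℕ) : off8 N1 N2 j < N1 + N2 := by
  unfold off8; split_ifs <;> omega

lemma decomp_unique (h1 : 5 ≤ N1) (h2 : 5 ≤ N2) {q1 s1 q2 s2 : ℕ}
    (hs1 : s1 < N1 + N2) (hs2 : s2 < N1 + N2)
    (he : q1 * (N1 + N2) + s1 = q2 * (N1 + N2) + s2) : q1 = q2 ∧ s1 = s2 := by
  have key : ∀ q s : ℕ, s < N1 + N2 →
      (q * (N1 + N2) + s) / (N1 + N2) = q ∧ (q * (N1 + N2) + s) % (N1 + N2) = s := by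
    intro q s hs
    rw [show q * (N1 + N2) + s = s + (N1 + N2) * q by ring,
      Nat.add_mul_div_left _ _ (show 0 < N1 + N2 by omega), Nat.add_mul_mod_self_left,
      Nat.div_eq_of_lt hs, Nat.mod_eq_of_lt hs]
    omega
  obtain ⟨d1, m1⟩ := key q1 s1 hs1
  obtain ⟨d2, m2⟩ := key q2 s2 hs2
  rw [he] at d1 m1
  omega

lemma sum_deg_le (hK : 1 ≤ K) (h1 : 5 ≤ N1) (h2 : 5 ≤ N2) :
    (∑ v : Fin (K * (N1 + N2)), deg (graphH K N1 N2) v) + (8 * K + 1) ≤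
      4 * (K * (N1 + N2)) := by
  classical
  have hn0 : 0 < K * (N1 + N2) := by
    have : 1 * (N1 + N2) ≤ K * (N1 + N2) := Nat.mul_le_mul_right _ hK
    omega
  obtain ⟨g, hgval⟩ : ∃ g : ℕ → Fin (K * (N1 + N2)),
      ∀ i < 8 * K, (g i).val = i / 8 * (N1 + N2) + off8 N1 N2 (i % 8) := by
    refine ⟨fun i => ⟨(i / 8 * (N1 + N2) + off8 N1 N2 (i % 8)) % (K * (N1 + N2)),
      Nat.mod_lt _ hn0⟩, ?_⟩
    intro i hi
    have hq : i / 8 < K := by omega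
    have hmul : (i / 8 + 1) * (N1 + N2) ≤ K * (N1 + N2) := Nat.mul_le_mul_right _ (by omega)
    have hmul2 : (i / 8 + 1) * (N1 + N2) = i / 8 * (N1 + N2) + (N1 + N2) := by ring
    have hol := off8_lt h1 h2 (i % 8)
    exact Nat.mod_eq_of_lt (by omega)
  set S : Finset (Fin (K * (N1 + N2))) := (Finset.range (8 * K)).image g with hS
  have hScard : S.card = 8 * K := by
    rw [hS, Finset.card_image_of_injOn, Finset.card_range]
    intro i hi j hj hij
    simp only [Finset.coe_range, Set.mem_Iio] at hi hj
    have hv := congrArg Fin.val hij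
    rw [hgval i hi, hgval j hj] at hv
    obtain ⟨hd, hm⟩ := decomp_unique h1 h2 (off8_lt h1 h2 _) (off8_lt h1 h2 _) hv
    have hi8 : i % 8 < 8 := by omega
    have hj8 : j % 8 < 8 := by omega
    have : i % 8 = j % 8 := by
      set a := i % 8 with ha
      set b := j % 8 with hb
      clear_value a b
      interval_cases a <;> interval_cases b <;> simp [off8] at hm <;> omega
    omega
  have hS3 : ∀ v ∈ S, deg (graphH K N1 N2) v ≤ 3 := by
    intro v hv
    rw [hS] at hv
    obtain ⟨i, hi, rfl⟩ := Finset.mem_image.mp hv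
    simp only [Finset.mem_range] at hi
    obtain ⟨q, j, hj, hqK, rfl⟩ : ∃ q j, j < 8 ∧ q < K ∧ i = 8 * q + j :=
      ⟨i / 8, i % 8, by omega, by omega, by omega⟩
    have hval : (g (8 * q + j)).val = q * (N1 + N2) + off8 N1 N2 j := by
      rw [hgval _ (by omega), show (8 * q + j) / 8 = q by omega,
        show (8 * q + j) % 8 = j by omega]
    have hmulA : (q + 1) * (N1 + N2) = q * (N1 + N2) + (N1 + N2) := by ring
    interval_cases j
    · -- off = 0
      simp only [show off8 N1 N2 0 = 0 by simp [off8]] at hval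
      apply deg_le_three_A
      intro w hw
      rcases Nat.eq_zero_or_pos q with rfl | hq0
      · omega
      · obtain ⟨q', rfl⟩ : ∃ q', q = q' + 1 := ⟨q - 1, by omega⟩
        have hmulB : (q' + 1) * (N1 + N2) = q' * (N1 + N2) + (N1 + N2) := by ring
        rw [blockIdx_eval h1 h2 w q' (N1 + N2 - 2) (by omega) (by omega),
          blockIdx_eval h1 h2 _ (q' + 1) 0 (by omega) (by omega)]
        rw [if_neg (by omega), if_pos (by omega)]
        omega
    · -- off = 1
      simp only [show off8 N1 N2 1 = 1 by simp [off8]] at hval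
      apply deg_le_three_A
      intro w hw
      rcases Nat.eq_zero_or_pos q with rfl | hq0
      · omega
      · obtain ⟨q', rfl⟩ : ∃ q', q = q' + 1 := ⟨q - 1, by omega⟩
        have hmulB : (q' + 1) * (N1 + N2) = q' * (N1 + N2) + (N1 + N2) := by ring
        rw [blockIdx_eval h1 h2 w q' (N1 + N2 - 1) (by omega) (by omega),
          blockIdx_eval h1 h2 _ (q' + 1) 1 (by omega) (by omega)]
        rw [if_neg (by omega), if_pos (by omega)]
        omega
    · -- off = N1 - 2
      simp only [show off8 N1 N2 2 = N1 - 2 by simp [off8]] at hval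
      apply deg_le_three_B
      rw [blockIdx_eval h1 h2 _ q N1 (by omega) (by omega),
        blockIdx_eval h1 h2 _ q (N1 - 2) (by omega) (by omega)]
      rw [if_neg (by omega), if_pos (by omega)]
      omega
    · -- off = N1 - 1
      simp only [show off8 N1 N2 3 = N1 - 1 by simp [off8]] at hval
      apply deg_le_three_B
      rw [blockIdx_eval h1 h2 _ q (N1 + 1) (by omega) (by omega),
        blockIdx_eval h1 h2 _ q (N1 - 1) (by omega) (by omega)]
      rw [if_neg (by omega), if_pos (by omega)]
      omega
    · -- off = N1
      simp only [show off8 N1 N2 4 = N1 by simp [off8]] at hval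
      apply deg_le_three_A
      intro w hw
      rw [blockIdx_eval h1 h2 w q (N1 - 2) (by omega) (by omega),
        blockIdx_eval h1 h2 _ q N1 (by omega) (by omega)]
      rw [if_pos (by omega), if_neg (by omega)]
      omega
    · -- off = N1 + 1
      simp only [show off8 N1 N2 5 = N1 + 1 by simp [off8]] at hval
      apply deg_le_three_A
      intro w hw
      rw [blockIdx_eval h1 h2 w q (N1 - 1) (by omega) (by omega),
        blockIdx_eval h1 h2 _ q (N1 + 1) (by omega) (by omega)]
      rw [if_pos (by omega), if_neg (by omega)]
      omega
    · -- off = N1 + N2 - 2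
      simp only [show off8 N1 N2 6 = N1 + N2 - 2 by simp [off8]] at hval
      apply deg_le_three_B
      rw [blockIdx_eval h1 h2 _ (q + 1) 0 (by omega) (by omega),
        blockIdx_eval h1 h2 _ q (N1 + N2 - 2) (by omega) (by omega)]
      rw [if_pos (by omega), if_neg (by omega)]
      omega
    · -- off = N1 + N2 - 1
      simp only [show off8 N1 N2 7 = N1 + N2 - 1 by simp [off8]] at hval
      apply deg_le_three_B
      rw [blockIdx_eval h1 h2 _ (q + 1) 1 (by omega) (by omega),
        blockIdx_eval h1 h2 _ q (N1 + N2 - 1) (by omega) (by omega)]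
      rw [if_pos (by omega), if_neg (by omega)]
      omega
  have h0S : (⟨0, hn0⟩ : Fin (K * (N1 + N2))) ∈ S := by
    rw [hS]
    refine Finset.mem_image.mpr ⟨0, by simp; omega, ?_⟩
    apply Fin.ext
    rw [hgval 0 (by omega)]
    norm_num [off8]
  have hsplit :
      ∑ v ∈ Finset.univ \ S, deg (graphH K N1 N2) v + ∑ v ∈ S, deg (graphH K N1 N2) v =
        ∑ v : Fin (K * (N1 + N2)), deg (graphH K N1 N2) v :=
    Finset.sum_sdiff (Finset.subset_univ S)
  have hz := Finset.add_sum_erase S (deg (graphH K N1 N2)) h0S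
  have hz2 : deg (graphH K N1 N2) (⟨0, hn0⟩ : Fin (K * (N1 + N2))) ≤ 2 :=
    deg_le_two_zero _ rfl
  have herase : ∑ v ∈ S.erase ⟨0, hn0⟩, deg (graphH K N1 N2) v ≤ (S.erase ⟨0, hn0⟩).card * 3 := by
    rw [← Finset.sum_const_nat (m := 3) (fun x _ => rfl)]
    exact Finset.sum_le_sum (fun x hx => hS3 x (Finset.erase_subset _ _ hx))
  have hecard : (S.erase ⟨0, hn0⟩).card = S.card - 1 := Finset.card_erase_of_mem h0S
  have hrest : ∑ v ∈ Finset.univ \ S, deg (graphH K N1 N2) v ≤ (Finset.univ \ S).card * 4 := by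
    rw [← Finset.sum_const_nat (m := 4) (fun x _ => rfl)]
    exact Finset.sum_le_sum (fun x _ => deg_le_four x)
  have hucard : (Finset.univ \ S).card = K * (N1 + N2) - S.card := by
    rw [Finset.card_sdiff_of_subset (Finset.subset_univ _), Finset.card_univ, Fintype.card_fin]
  have h8K : 8 * K ≤ K * (N1 + N2) := by
    calc 8 * K = K * 8 := by ring
    _ ≤ K * (N1 + N2) := Nat.mul_le_mul_left _ (by omega)
  omega

end TotalDeg

section Assembly

variable {K N1 N2 : ℕ}

lemma sum_alt_le (t : ℕ → ℝ) (c1 c2 : ℝ) (M : ℕ)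
    (hA : ∀ k < 2 * M, k % 2 = 0 → c1 ≤ t k) (hB : ∀ k < 2 * M, k % 2 = 1 → c2 ≤ t k) :
    (M : ℝ) * (c1 + c2) ≤ ∑ k ∈ Finset.range (2 * M), t k := by
  induction M with
  | zero => simp
  | succ M ih =>
    have hind := ih (fun k hk h => hA k (by omega) h) (fun k hk h => hB k (by omega) h)
    rw [show 2 * (M + 1) = (2 * M + 1) + 1 by ring, Finset.sum_range_succ,
      Finset.sum_range_succ]
    have e1 := hA (2 * M) (by omega) (by omega)
    have e2 := hB (2 * M + 1) (by omega) (by omega)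
    push_cast
    linarith

lemma sum_alt_lt (t : ℕ → ℝ) (c1 c2 : ℝ) (M : ℕ) (hM : 1 ≤ M)
    (hA : ∀ k < 2 * M, k % 2 = 0 → c1 < t k) (hB : ∀ k < 2 * M, k % 2 = 1 → c2 < t k) :
    (M : ℝ) * (c1 + c2) < ∑ k ∈ Finset.range (2 * M), t k := by
  obtain ⟨M', rfl⟩ : ∃ M', M = M' + 1 := ⟨M - 1, by omega⟩
  have hind := sum_alt_le t c1 c2 M' (fun k hk h => (hA k (by omega) h).le)
    (fun k hk h => (hB k (by omega) h).le)
  rw [show 2 * (M' + 1) = (2 * M' + 1) + 1 by ring, Finset.sum_range_succ,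
    Finset.sum_range_succ]
  have e1 := hA (2 * M') (by omega) (by omega)
  have e2 := hB (2 * M' + 1) (by omega) (by omega)
  push_cast
  linarith

lemma range_subset_image (hK : 1 ≤ K) (h1 : 5 ≤ N1) (h2 : 5 ≤ N2) :
    Finset.range (2 * K) ⊆
      Finset.univ.image (naturalLabel N1 N2 (n := K * (N1 + N2))) := by
  intro k hk
  simp only [Finset.mem_range] at hk
  have hq : k / 2 < K := by omega
  have hmul : (k / 2 + 1) * (N1 + N2) ≤ K * (N1 + N2) := Nat.mul_le_mul_right _ (by omega)
  have hmul2 : (k / 2 + 1) * (N1 + N2) = k / 2 * (N1 + N2) + (N1 + N2) := by ring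
  rcases (by omega : k % 2 = 0 ∨ k % 2 = 1) with hb | hb
  · refine Finset.mem_image.mpr ⟨⟨k / 2 * (N1 + N2), by omega⟩, Finset.mem_univ _, ?_⟩
    show blockIdx N1 N2 (k / 2 * (N1 + N2)) = k
    rw [blockIdx_eval h1 h2 _ (k / 2) 0 (by omega) (by omega), if_pos (by omega)]
    omega
  · refine Finset.mem_image.mpr ⟨⟨k / 2 * (N1 + N2) + N1, by omega⟩, Finset.mem_univ _, ?_⟩
    show blockIdx N1 N2 (k / 2 * (N1 + N2) + N1) = k
    rw [blockIdx_eval h1 h2 _ (k / 2) N1 rfl (by omega), if_neg (by omega)]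
    omega

end Assembly



/-- Lemma 4 of the paper: the Newman modularity of the natural
clustering of `H_{K,N₁,N₂}` satisfies
`Q_N < 1 − K((4N₁−8)² + (4N₂−8)²)/(4K(N₁+N₂−2))²`. -/
theorem statement15 (K N1 N2 : ℕ) (hK : 1 ≤ K) (h1 : 5 ≤ N1) (h2 : 5 ≤ N2) :
    QN (graphH K N1 N2) (naturalLabel N1 N2) <
      1 - (K : ℝ) * ((4 * (N1 : ℝ) - 8) ^ 2 + (4 * (N2 : ℝ) - 8) ^ 2) /
          (4 * (K : ℝ) * ((N1 : ℝ) + (N2 : ℝ) - 2)) ^ 2 := by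
  classical
  have hn0 : 0 < K * (N1 + N2) := by
    have : 1 * (N1 + N2) ≤ K * (N1 + N2) := Nat.mul_le_mul_right _ hK
    omega
  have hHS := handshake K N1 N2
  have hUB := sum_deg_le hK h1 h2
  have hm_ub : 2 * numEdges (graphH K N1 N2) + 8 * K + 1 ≤ 4 * (K * (N1 + N2)) := by omega
  have hm_pos : 1 ≤ numEdges (graphH K N1 N2) := by
    have hd0 : 2 ≤ deg (graphH K N1 N2) ⟨0, hn0⟩ := deg_ge_two hK h1 h2 _
    have hle : deg (graphH K N1 N2) ⟨0, hn0⟩ ≤ ∑ v, deg (graphH K N1 N2) v :=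
      Finset.single_le_sum (fun v _ => Nat.zero_le _) (Finset.mem_univ _)
    omega
  have hK' : (1 : ℝ) ≤ (K : ℝ) := by exact_mod_cast hK
  have h1' : (5 : ℝ) ≤ (N1 : ℝ) := by exact_mod_cast h1
  have h2' : (5 : ℝ) ≤ (N2 : ℝ) := by exact_mod_cast h2
  have hCpos : (0 : ℝ) < 4 * K * ((N1 : ℝ) + N2 - 2) := by nlinarith
  have hEpos : (0 : ℝ) < 2 * (numEdges (graphH K N1 N2) : ℝ) := by
    have : (1 : ℝ) ≤ (numEdges (graphH K N1 N2) : ℝ) := by exact_mod_cast hm_pos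
    linarith
  have hEC : 2 * (numEdges (graphH K N1 N2) : ℝ) < 4 * K * ((N1 : ℝ) + N2 - 2) := by
    have hcast : 2 * (numEdges (graphH K N1 N2) : ℝ) + 8 * K + 1 ≤ 4 * (K * ((N1 : ℝ) + N2)) := by
      exact_mod_cast hm_ub
    nlinarith
  have hQf : Qf (graphH K N1 N2) (naturalLabel N1 N2) ≤ 1 := by
    rw [Qf, div_le_one (by linarith : (0 : ℝ) < (numEdges (graphH K N1 N2) : ℝ))]
    exact_mod_cast Finset.card_filter_le _ _
  have key : (K : ℝ) * (((4 * (N1 : ℝ) - 8) / (4 * K * ((N1 : ℝ) + N2 - 2))) ^ 2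
      + ((4 * (N2 : ℝ) - 8) / (4 * K * ((N1 : ℝ) + N2 - 2))) ^ 2)
      < Q0 (graphH K N1 N2) (naturalLabel N1 N2) := by
    refine lt_of_lt_of_le (sum_alt_lt (fun k =>
      ((clusterDeg (graphH K N1 N2) (naturalLabel N1 N2) k : ℝ)
        / (2 * (numEdges (graphH K N1 N2) : ℝ))) ^ 2) _ _ K hK ?_ ?_) ?_
    · intro k hk hpar
      have hcd := clusterDeg_ge hK h1 h2 (k / 2) 0 (by omega) (by omega)
      rw [if_pos rfl, show 2 * (k / 2) + 0 = k by omega] at hcd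
      have hcdR : 4 * (N1 : ℝ) - 8 ≤
          (clusterDeg (graphH K N1 N2) (naturalLabel N1 N2) k : ℝ) := by
        have := (Nat.cast_le (α := ℝ)).mpr hcd
        push_cast at this
        linarith
      have ha : (0 : ℝ) < 4 * (N1 : ℝ) - 8 := by linarith
      have hdiv : (4 * (N1 : ℝ) - 8) / (4 * K * ((N1 : ℝ) + N2 - 2)) <
          (clusterDeg (graphH K N1 N2) (naturalLabel N1 N2) k : ℝ)
            / (2 * (numEdges (graphH K N1 N2) : ℝ)) := by
        rw [div_lt_div_iff₀ hCpos hEpos]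
        nlinarith
      exact pow_lt_pow_left₀ hdiv (le_of_lt (div_pos ha hCpos)) two_ne_zero
    · intro k hk hpar
      have hcd := clusterDeg_ge hK h1 h2 (k / 2) 1 (by omega) (by omega)
      rw [if_neg one_ne_zero, show 2 * (k / 2) + 1 = k by omega] at hcd
      have hcdR : 4 * (N2 : ℝ) - 8 ≤
          (clusterDeg (graphH K N1 N2) (naturalLabel N1 N2) k : ℝ) := by
        have := (Nat.cast_le (α := ℝ)).mpr hcd
        push_cast at this
        linarith
      have ha : (0 : ℝ) < 4 * (N2 : ℝ) - 8 := by linarith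
      have hdiv : (4 * (N2 : ℝ) - 8) / (4 * K * ((N1 : ℝ) + N2 - 2)) <
          (clusterDeg (graphH K N1 N2) (naturalLabel N1 N2) k : ℝ)
            / (2 * (numEdges (graphH K N1 N2) : ℝ)) := by
        rw [div_lt_div_iff₀ hCpos hEpos]
        nlinarith
      exact pow_lt_pow_left₀ hdiv (le_of_lt (div_pos ha hCpos)) two_ne_zero
    · rw [Q0]
      exact Finset.sum_le_sum_of_subset_of_nonneg (range_subset_image hK h1 h2)
        (fun k _ _ => by positivity)
  have hrw : (K : ℝ) * ((4 * (N1 : ℝ) - 8) ^ 2 + (4 * (N2 : ℝ) - 8) ^ 2) /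
        (4 * (K : ℝ) * ((N1 : ℝ) + (N2 : ℝ) - 2)) ^ 2
      = (K : ℝ) * (((4 * (N1 : ℝ) - 8) / (4 * K * ((N1 : ℝ) + N2 - 2))) ^ 2
        + ((4 * (N2 : ℝ) - 8) / (4 * K * ((N1 : ℝ) + N2 - 2))) ^ 2) := by
    field_simp
  rw [QN, hrw]
  linarith
end
end

section
/- For all integers K ≥ 1, N₁,N₂ ≥ 5 and 1 ≤ J ≤ n = K(N₁+N₂), the clustering 𝐔_{K,N₁,N₂,J} of the graph H_{K,N₁,N₂} has at most 3J extracluster edges, i.e. the number of edges of H_{K,N₁,N₂} whose two endpoints lie in different clusters of 𝐔_{K,N₁,N₂,J} is at most 3J. -/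
open scoped Classical

noncomputable section

open BadComm

/-- The min/max-of-values encoding of an unordered pair is injective. -/
private lemma sym2_minmax_inj {n : ℕ} :
    Function.Injective (Sym2.lift ⟨fun (a b : Fin n) => (min a.val b.val, max a.val b.val),
      fun a b => by simp [min_comm, max_comm]⟩ : Sym2 (Fin n) → ℕ × ℕ) := by
  intro e1 e2
  induction e1 using Sym2.ind with
  | _ a b =>
  induction e2 using Sym2.ind with
  | _ c d =>
  intro hge
  simp only [Sym2.lift_mk, Prod.mk.injEq] at hge
  rw [Sym2.eq_iff]
  obtain ⟨h1, h2⟩ := hge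
  have h3 : (a.val = c.val ∧ b.val = d.val) ∨ (a.val = d.val ∧ b.val = c.val) := by omega
  rcases h3 with ⟨h3, h4⟩ | ⟨h3, h4⟩
  · exact Or.inl ⟨Fin.ext h3, Fin.ext h4⟩
  · exact Or.inr ⟨Fin.ext h3, Fin.ext h4⟩

/-- the clustering `𝐔_{K,N₁,N₂,J}` of `H_{K,N₁,N₂}` has at most `3J`
extracluster edges. -/
theorem statement16 (K N1 N2 J : ℕ) (hK : 1 ≤ K) (h1 : 5 ≤ N1) (h2 : 5 ≤ N2)
    (hJ1 : 1 ≤ J) (hJn : J ≤ K * (N1 + N2)) :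
    extraEdges (graphH K N1 N2) (uLabel J) ≤ 3 * J := by
  classical
  set n := K * (N1 + N2) with hn
  set L := n / J with hLdef
  have hL0 : 0 < L := (Nat.one_le_div_iff hJ1).mpr hJn
  set g : Sym2 (Fin n) → ℕ × ℕ :=
    (Sym2.lift ⟨fun (a b : Fin n) => (min a.val b.val, max a.val b.val),
      fun a b => by simp [min_comm, max_comm]⟩) with hg
  set h : ℕ × ℕ → ℕ × ℕ := fun p =>
    ((p.1 + 1) * L - (if p.2 = 2 then 2 else 1),
     (p.1 + 1) * L + (if p.2 = 1 then 1 else 0)) with hh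
  have key : extraEdges (graphH K N1 N2) (uLabel J)
      ≤ ((Finset.range J ×ˢ Finset.range 3).image h).card := by
    apply Finset.card_le_card_of_injOn g
    · intro e he
      induction e using Sym2.ind with
      | _ a b =>
      simp only [Finset.mem_coe, Finset.mem_filter, edgeFin, Finset.mem_univ, true_and,
        SimpleGraph.mem_edgeSet] at he
      obtain ⟨hadj, hns⟩ := he
      have hlab : uLabel J a ≠ uLabel J b := by
        intro hl
        apply hns
        intro u hu v hv
        rw [Sym2.mem_iff] at hu hv
        rcases hu with rfl | rfl <;> rcases hv with rfl | rfl <;> simp [hl]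
      have hlab' : min (a.val / L) J ≠ min (b.val / L) J := hlab
      set u := min a.val b.val with hu
      set v := max a.val b.val with hv
      have hdiff : v = u + 1 ∨ v = u + 2 := by
        rcases hadj with (h' | h') | ⟨h' | h', -⟩ <;> omega
      have hlabuv : min (u / L) J ≠ min (v / L) J := by
        rcases le_total a.val b.val with hab | hab
        · rwa [hu, hv, min_eq_left hab, max_eq_right hab]
        · rw [hu, hv, min_eq_right hab, max_eq_left hab]; exact fun hx => hlab' hx.symm
      have hdle : u / L ≤ v / L := Nat.div_le_div_right (by omega)
      have hJlt : u / L < J ∧ u / L < v / L := by omega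
      have hA : u < (u / L + 1) * L := (Nat.div_lt_iff_lt_mul hL0).mp (Nat.lt_succ_self _)
      have hB : (u / L + 1) * L ≤ v :=
        le_trans (Nat.mul_le_mul_right L hJlt.2) (Nat.div_mul_le_self v L)
      have hgval : g s(a, b) = (u, v) := by simp [hg, hu, hv]
      rw [hgval]
      simp only [Finset.mem_coe, Finset.mem_image, Finset.mem_product, Finset.mem_range]
      set m := (u / L + 1) * L with hm
      rcases hdiff with hd | hd
      · exact ⟨(u / L, 0), ⟨hJlt.1, by norm_num⟩, by simp [hh, ← hm]; omega⟩
      · by_cases hm1 : m = u + 1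
        · exact ⟨(u / L, 1), ⟨hJlt.1, by norm_num⟩, by simp [hh, ← hm]; omega⟩
        · exact ⟨(u / L, 2), ⟨hJlt.1, by norm_num⟩, by simp [hh, ← hm]; omega⟩
    · exact fun e1 _ e2 _ hge => sym2_minmax_inj hge
  calc extraEdges (graphH K N1 N2) (uLabel J)
      ≤ ((Finset.range J ×ˢ Finset.range 3).image h).card := key
    _ ≤ (Finset.range J ×ˢ Finset.range 3).card := Finset.card_image_le
    _ = 3 * J := by simp [Finset.card_product, mul_comm]
end
end

section
/- For every integer K ≥ 1 and every real ε ∈ (0, 1/(2K)), there exist integers N₁, N₂ ≥ 5 and J with 1 ≤ J ≤ K(N₁+N₂) (depending on ε and K) such that: (i) Q_N(𝐕_{K,N₁,N₂}, H_{K,N₁,N₂}) < 1 − 1/(2K) < 1 − ε < Q_N(𝐔_{K,N₁,N₂,J}, H_{K,N₁,N₂}), and (ii) the Jaccard similarity satisfies S(𝐕_{K,N₁,N₂}, 𝐔_{K,N₁,N₂,J}) < ε. -/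
open scoped Classical

noncomputable section

namespace BadCommP
open BadComm Finset

variable {V : Type*} [Fintype V]

lemma sameCluster_mk (c : V → ℕ) (u v : V) : sameCluster c s(u, v) ↔ c u = c v := by
  constructor
  · intro h; exact h u (by simp) v (by simp)
  · intro h x hx y hy
    rcases Sym2.mem_iff.1 hx with rfl | rfl <;> rcases Sym2.mem_iff.1 hy with rfl | rfl
    · rfl
    · exact h
    · exact h.symm
    · rfl

lemma mem_edgeFin {G : SimpleGraph V} {e : Sym2 V} : e ∈ edgeFin G ↔ e ∈ G.edgeSet := by
  simp [edgeFin]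

lemma edgeFin_eq (G : SimpleGraph V) [DecidableRel G.Adj] [Fintype G.edgeSet] :
    edgeFin G = G.edgeFinset := by
  ext e; simp [mem_edgeFin, SimpleGraph.mem_edgeFinset]

lemma deg_eq (G : SimpleGraph V) [DecidableRel G.Adj] (v : V) : deg G v = G.degree v := by
  rw [SimpleGraph.degree, SimpleGraph.neighborFinset_def]
  apply Finset.card_bij (fun a _ => a) <;> simp [deg]

lemma handshake (G : SimpleGraph V) : ∑ v, deg G v = 2 * numEdges G := by
  classical
  have h := SimpleGraph.sum_degrees_eq_twice_card_edges G
  rw [numEdges, edgeFin_eq G]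
  simpa [deg_eq] using h

lemma sum_clusterDeg (G : SimpleGraph V) (c : V → ℕ) :
    ∑ k ∈ Finset.univ.image c, clusterDeg G c k = 2 * numEdges G := by
  rw [← handshake G]
  exact Finset.sum_fiberwise_of_maps_to (fun v _ => Finset.mem_image_of_mem c (mem_univ v)) _

def pmin {n : ℕ} (p : Sym2 (Fin n)) : ℕ :=
  Sym2.lift ⟨fun a b => min a.val b.val, fun a b => min_comm _ _⟩ p

def pmax {n : ℕ} (p : Sym2 (Fin n)) : ℕ :=
  Sym2.lift ⟨fun a b => max a.val b.val, fun a b => max_comm _ _⟩ p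

@[simp] lemma pmin_mk {n : ℕ} (a b : Fin n) : pmin s(a, b) = min a.val b.val := rfl
@[simp] lemma pmax_mk {n : ℕ} (a b : Fin n) : pmax s(a, b) = max a.val b.val := rfl

lemma pair_ext {n : ℕ} {p q : Sym2 (Fin n)} (h1 : pmin p = pmin q) (h2 : pmax p = pmax q) :
    p = q := by
  induction p using Sym2.ind with | _ a b =>
  induction q using Sym2.ind with | _ c d =>
  simp only [pmin_mk, pmax_mk] at h1 h2
  have : (a.val = c.val ∧ b.val = d.val) ∨ (a.val = d.val ∧ b.val = c.val) := by omega
  rcases this with ⟨h3, h4⟩ | ⟨h3, h4⟩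
  · rw [Fin.eq_of_val_eq h3, Fin.eq_of_val_eq h4]
  · rw [Fin.eq_of_val_eq h3, Fin.eq_of_val_eq h4, Sym2.eq_swap]

open BadComm Finset

lemma blockIdx_eq (N v : ℕ) (hN : 0 < N) : blockIdx N N v = v / N := by
  have h2N : N + N = 2 * N := by ring
  rw [blockIdx, h2N]
  have hq := Nat.div_add_mod v (2 * N)
  set q := v / (2 * N) with hqdef
  set r := v % (2 * N) with hrdef
  have hr : r < 2 * N := Nat.mod_lt _ (by omega)
  have hv : v = 2 * N * q + r := by omega
  rcases Nat.lt_or_ge r N with h | h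
  · have : v / N = 2 * q + r / N := by
      rw [hv, show 2 * N * q + r = N * (2 * q) + r by ring, Nat.mul_add_div hN]
    rw [this, Nat.div_eq_of_lt h]; simp [h]
  · have hr1 : r / N = 1 := by
      have : r = N + (r - N) := by omega
      rw [this, Nat.add_div_left _ hN, Nat.div_eq_of_lt (by omega)]
    have : v / N = 2 * q + r / N := by
      rw [hv, show 2 * N * q + r = N * (2 * q) + r by ring, Nat.mul_add_div hN]
    rw [this, hr1]
    simp [Nat.not_lt.2 h]

lemma uLabel_eq (K L : ℕ) (hK : 1 ≤ K) (hL : 1 ≤ L) (v : Fin (K * (L * L + L * L))) :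
    uLabel (2 * K * L) v = v.val / L := by
  have hn : K * (L * L + L * L) = (2 * K * L) * L := by ring
  have hdiv : K * (L * L + L * L) / (2 * K * L) = L := by
    rw [hn, Nat.mul_div_cancel_left _ (by positivity)]
  rw [uLabel, hdiv]
  have hv : v.val < (2 * K * L) * L := by rw [← hn]; exact v.isLt
  have : v.val / L < 2 * K * L := Nat.div_lt_of_lt_mul (by calc v.val < 2 * K * L * L := hv
      _ = L * (2 * K * L) := by ring)
  omega

lemma adj_iff {K N1 N2 : ℕ} (u v : Fin (K * (N1 + N2))) :
    (graphH K N1 N2).Adj u v ↔ ((u.val + 1 = v.val ∨ v.val + 1 = u.val) ∨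
             ((u.val + 2 = v.val ∨ v.val + 2 = u.val) ∧
              blockIdx N1 N2 u.val = blockIdx N1 N2 v.val)) := Iff.rfl

lemma edge_struct {K N1 N2 : ℕ} {e : Sym2 (Fin (K * (N1 + N2)))}
    (he : e ∈ edgeFin (graphH K N1 N2)) :
    ∃ u v : Fin (K * (N1 + N2)), e = s(u, v) ∧ u.val < v.val ∧
      (v.val = u.val + 1 ∨ v.val = u.val + 2) := by
  induction e using Sym2.ind with | _ a b =>
  rw [mem_edgeFin, SimpleGraph.mem_edgeSet, adj_iff] at he
  rcases Nat.lt_or_ge a.val b.val with h | h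
  · exact ⟨a, b, rfl, h, by omega⟩
  · refine ⟨b, a, Sym2.eq_swap, ?_, by omega⟩
    omega

lemma deg_le_four {K N1 N2 : ℕ} (v : Fin (K * (N1 + N2))) :
    deg (graphH K N1 N2) v ≤ 4 := by
  have : deg (graphH K N1 N2) v ≤ ({0, 1, 3, 4} : Finset ℕ).card := by
    apply Finset.card_le_card_of_injOn (fun w => w.val + 2 - v.val)
    · intro w hw
      rw [Finset.mem_coe, Finset.mem_filter] at hw
      have := hw.2
      rw [adj_iff] at this
      simp only [Finset.mem_coe, Finset.mem_insert, Finset.mem_singleton]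
      omega
    · intro w hw w' hw' h
      rw [Finset.coe_filter] at hw hw'
      simp only [Set.mem_setOf_eq] at hw hw'
      have h1 := hw.2; have h2 := hw'.2
      rw [adj_iff] at h1 h2
      have h' : w.val + 2 - v.val = w'.val + 2 - v.val := h
      apply Fin.eq_of_val_eq
      omega
  simpa using this

lemma one_le_deg {K N1 N2 : ℕ} (hn : 2 ≤ K * (N1 + N2)) (v : Fin (K * (N1 + N2))) :
    1 ≤ deg (graphH K N1 N2) v := by
  rw [deg, Nat.one_le_iff_ne_zero, ← Nat.pos_iff_ne_zero, Finset.card_pos]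
  rcases Nat.lt_or_ge (v.val + 1) (K * (N1 + N2)) with h | h
  · exact ⟨⟨v.val + 1, h⟩, by simp [adj_iff]⟩
  · refine ⟨⟨v.val - 1, by omega⟩, ?_⟩
    simp only [Finset.mem_filter, Finset.mem_univ, true_and, adj_iff]
    left; right; show (v.val - 1) + 1 = v.val; omega

-- stage 3 body (appended inside BadCommP)
lemma divmod (L q r : ℕ) (hL : 0 < L) (hr : r < L) :
    (q * L + r) / L = q ∧ (q * L + r) % L = r := by
  constructor
  · rw [add_comm, mul_comm, Nat.add_mul_div_left _ _ hL, Nat.div_eq_of_lt hr, Nat.zero_add]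
  · rw [add_comm, mul_comm, Nat.add_mul_mod_self_left, Nat.mod_eq_of_lt hr]

lemma rep_unique {N q r q' r' : ℕ} (hN : 0 < N) (hr : r < N) (hr' : r' < N)
    (h : q * N + r = q' * N + r') : q = q' ∧ r = r' := by
  have h1 := (divmod N q r hN hr).1
  have h3 := (divmod N q r hN hr).2
  have h2 := (divmod N q' r' hN hr').1
  have h4 := (divmod N q' r' hN hr').2
  rw [h] at h1 h3
  omega

lemma cross_struct {L u v : ℕ} (hL : 3 ≤ L) (hd : v = u + 1 ∨ v = u + 2)
    (hne : u / L ≠ v / L) : v / L = u / L + 1 ∧ v % L ≤ 1 := by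
  have hL0 : 0 < L := by omega
  have h1 : u / L * L + u % L = u := Nat.div_add_mod' u L
  have hbu : u % L < L := Nat.mod_lt _ hL0
  rcases Nat.lt_or_ge (u % L + (v - u)) L with h | h
  · exfalso
    have hv : v = u / L * L + (u % L + (v - u)) := by omega
    have h2 := (divmod L (u / L) (u % L + (v - u)) hL0 h).1
    rw [hv] at hne
    exact hne h2.symm
  · have hx : (u / L + 1) * L = u / L * L + L := by ring
    have key : v = (u / L + 1) * L + (u % L + (v - u) - L) := by omega
    have h2 := divmod L (u / L + 1) (u % L + (v - u) - L) hL0 (by omega)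
    rw [key, h2.1, h2.2]
    omega

lemma intra_add_extra (G : SimpleGraph V) (c : V → ℕ) :
    intraEdges G c + extraEdges G c = numEdges G :=
  Finset.card_filter_add_card_filter_not _

lemma offDiag_struct {n : ℕ} {p : Sym2 (Fin n)} (hp : ¬ p.IsDiag) :
    ∃ u v : Fin n, p = s(u, v) ∧ u.val < v.val := by
  induction p using Sym2.ind with | _ a b =>
  rw [Sym2.mk_isDiag_iff] at hp
  rcases Nat.lt_or_ge a.val b.val with h | h
  · exact ⟨a, b, rfl, h⟩
  · refine ⟨b, a, Sym2.eq_swap, ?_⟩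
    have : a.val ≠ b.val := fun hh => hp (Fin.eq_of_val_eq hh)
    omega

lemma mem_offDiagPairs {p : Sym2 V} : p ∈ offDiagPairs V ↔ ¬ p.IsDiag := by
  simp [offDiagPairs]

section Counting

variable (K L : ℕ)

lemma extraU_le (hK : 1 ≤ K) (hL : 5 ≤ L) :
    extraEdges (graphH K (L * L) (L * L)) (uLabel (2 * K * L)) ≤ 8 * K * L := by
  have hcard : extraEdges (graphH K (L * L) (L * L)) (uLabel (2 * K * L)) ≤
      ((Finset.range (2 * K * L)) ×ˢ (Finset.range 2 ×ˢ Finset.range 2)).card := by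
    apply Finset.card_le_card_of_injOn
      (fun e => (pmax e / L, (pmax e % L, pmax e - pmin e - 1)))
    · intro e he
      rw [Finset.mem_coe, Finset.mem_filter] at he
      obtain ⟨u, v, rfl, hlt, hd⟩ := edge_struct he.1
      have hne : u.val / L ≠ v.val / L := by
        intro hh
        apply he.2
        rw [sameCluster_mk, uLabel_eq K L hK (by omega), uLabel_eq K L hK (by omega), hh]
      have hmax : pmax s(u, v) = v.val := by rw [pmax_mk]; omega
      have hmin : pmin s(u, v) = u.val := by rw [pmin_mk]; omega
      obtain ⟨hq, hr⟩ := cross_struct (by omega) (by omega) hne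
      have hv : v.val < (2 * K * L) * L := by
        have := v.isLt
        have hh : K * (L * L + L * L) = (2 * K * L) * L := by ring
        omega
      have : v.val / L < 2 * K * L := Nat.div_lt_of_lt_mul
        (by calc v.val < (2 * K * L) * L := hv
            _ = L * (2 * K * L) := by ring)
      simp only [Finset.mem_coe, Finset.mem_product, Finset.mem_range, hmax, hmin]
      refine ⟨this, by omega, by omega⟩
    · intro e he e' he' heq
      rw [Finset.coe_filter] at he he'
      simp only [Set.mem_setOf_eq] at he he'
      obtain ⟨u, v, rfl, hlt, hd⟩ := edge_struct he.1
      obtain ⟨u', v', rfl, hlt', hd'⟩ := edge_struct he'.1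
      simp only [Prod.mk.injEq] at heq
      obtain ⟨e1, e2, e3⟩ := heq
      have hmax : pmax s(u, v) = v.val := by rw [pmax_mk]; omega
      have hmin : pmin s(u, v) = u.val := by rw [pmin_mk]; omega
      have hmax' : pmax s(u', v') = v'.val := by rw [pmax_mk]; omega
      have hmin' : pmin s(u', v') = u'.val := by rw [pmin_mk]; omega
      have hv1 : v.val / L * L + v.val % L = v.val := Nat.div_add_mod' _ _
      have hv2 : v'.val / L * L + v'.val % L = v'.val := Nat.div_add_mod' _ _
      rw [hmax, hmax'] at e1 e2
      rw [hmax, hmax', hmin, hmin'] at e3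
      have hvv : v.val = v'.val := by rw [← hv1, ← hv2, e1, e2]
      apply pair_ext <;> simp only [pmin_mk, pmax_mk] <;> omega
  calc extraEdges (graphH K (L * L) (L * L)) (uLabel (2 * K * L)) ≤ _ := hcard
    _ = 8 * K * L := by
        simp only [Finset.card_product, Finset.card_range]; ring

end Counting
section Counting2

variable (K L : ℕ)

lemma fiber_card_le (hK : 1 ≤ K) (hL : 5 ≤ L) (j : ℕ) :
    ((Finset.univ : Finset (Fin (K * (L * L + L * L)))).filter
      (fun v => uLabel (2 * K * L) v = j)).card ≤ L := by
  have : ((Finset.univ : Finset (Fin (K * (L * L + L * L)))).filter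
      (fun v => uLabel (2 * K * L) v = j)).card ≤ (Finset.range L).card :=
    Finset.card_le_card_of_injOn (fun v => v.val % L)
      (fun v _ => Finset.mem_range.2 (Nat.mod_lt _ (by omega)))
      (by
        intro v hv w hw h
        rw [Finset.coe_filter] at hv hw
        simp only [Set.mem_setOf_eq] at hv hw
        have h' : v.val % L = w.val % L := h
        have hv1 : v.val / L * L + v.val % L = v.val := Nat.div_add_mod' _ _
        have hw1 : w.val / L * L + w.val % L = w.val := Nat.div_add_mod' _ _
        have hdv : v.val / L = w.val / L := by
          rw [uLabel_eq K L hK (by omega)] at hv hw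
          rw [hv.2, hw.2]
        rw [hdv] at hv1
        exact Fin.eq_of_val_eq (by omega))
  simpa using this

lemma clusterDeg_le (hK : 1 ≤ K) (hL : 5 ≤ L) (j : ℕ) :
    clusterDeg (graphH K (L * L) (L * L)) (uLabel (2 * K * L)) j ≤ 4 * L := by
  calc clusterDeg (graphH K (L * L) (L * L)) (uLabel (2 * K * L)) j
      ≤ ∑ _v ∈ (Finset.univ.filter (fun v => uLabel (2 * K * L) v = j)), 4 :=
        Finset.sum_le_sum (fun v _ => deg_le_four v)
    _ = (Finset.univ.filter (fun v => uLabel (2 * K * L) v = j)).card * 4 := by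
        rw [Finset.sum_const, smul_eq_mul]
    _ ≤ L * 4 := by
        have := fiber_card_le K L hK hL j
        omega
    _ = 4 * L := by ring

lemma sU_le (hK : 1 ≤ K) (hL : 5 ≤ L) :
    samePairCount (uLabel (2 * K * L) : Fin (K * (L * L + L * L)) → ℕ) ≤
      K * (L * L + L * L) * L := by
  have hcard : samePairCount (uLabel (2 * K * L) : Fin (K * (L * L + L * L)) → ℕ) ≤
      ((Finset.range (K * (L * L + L * L))) ×ˢ (Finset.range L)).card := by
    apply Finset.card_le_card_of_injOn (fun p => (pmin p, pmax p - pmin p))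
    · intro p hp
      rw [Finset.mem_coe, Finset.mem_filter] at hp
      obtain ⟨u, v, rfl, hlt⟩ := offDiag_struct (mem_offDiagPairs.1 hp.1)
      have hsame : u.val / L = v.val / L := by
        have := hp.2
        rw [sameCluster_mk, uLabel_eq K L hK (by omega), uLabel_eq K L hK (by omega)] at this
        exact this
      have hu1 : u.val / L * L + u.val % L = u.val := Nat.div_add_mod' _ _
      have hv1 : v.val / L * L + v.val % L = v.val := Nat.div_add_mod' _ _
      rw [hsame] at hu1
      have hmu : u.val % L < L := Nat.mod_lt _ (by omega)
      have hmv : v.val % L < L := Nat.mod_lt _ (by omega)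
      simp only [Finset.mem_coe, Finset.mem_product, Finset.mem_range, pmin_mk, pmax_mk]
      constructor
      · have := u.isLt; omega
      · omega
    · intro p hp p' hp' heq
      rw [Finset.coe_filter] at hp hp'
      simp only [Prod.mk.injEq] at heq
      apply pair_ext heq.1
      simp only [Set.mem_setOf_eq] at hp hp'
      obtain ⟨u, v, rfl, hlt⟩ := offDiag_struct (mem_offDiagPairs.1 hp.1)
      obtain ⟨u', v', rfl, hlt'⟩ := offDiag_struct (mem_offDiagPairs.1 hp'.1)
      have h1 := heq.1
      have h2 := heq.2
      simp only [pmin_mk, pmax_mk] at h1 h2 ⊢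
      omega
  calc samePairCount (uLabel (2 * K * L) : Fin (K * (L * L + L * L)) → ℕ) ≤ _ := hcard
    _ ≤ K * (L * L + L * L) * L := by
        simp only [Finset.card_product, Finset.card_range]
        exact le_rfl

lemma sV_ge (hK : 1 ≤ K) (hL : 5 ≤ L) :
    2 * K * (L * L / 2) * (L * L / 2) ≤
      samePairCount (naturalLabel (L * L) (L * L) : Fin (K * (L * L + L * L)) → ℕ) := by
  have hN0 : 0 < L * L := by positivity
  have h25 : 25 ≤ L * L := Nat.mul_le_mul hL hL
  have hn0 : 0 < K * (L * L + L * L) := Nat.mul_pos (by omega) (by omega)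
  have hbound : ∀ q r : ℕ, q < 2 * K → r < L * L → q * (L * L) + r < K * (L * L + L * L) := by
    intro q r hq hr
    have h1 : (q + 1) * (L * L) ≤ (2 * K) * (L * L) := Nat.mul_le_mul_right _ (by omega)
    have h2 : (q + 1) * (L * L) = q * (L * L) + L * L := by ring
    have h3 : K * (L * L + L * L) = 2 * K * (L * L) := by ring
    omega
  have key : ((Finset.range (2 * K)) ×ˢ
        ((Finset.range (L * L / 2)) ×ˢ (Finset.range (L * L / 2)))).card
      ≤ samePairCount (naturalLabel (L * L) (L * L) : Fin (K * (L * L + L * L)) → ℕ) := by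
    apply Finset.card_le_card_of_injOn
      (fun x => s((⟨(x.1 * (L * L) + x.2.1) % (K * (L * L + L * L)),
            Nat.mod_lt _ hn0⟩ : Fin (K * (L * L + L * L))),
          (⟨(x.1 * (L * L) + L * L / 2 + x.2.2) % (K * (L * L + L * L)),
            Nat.mod_lt _ hn0⟩ : Fin (K * (L * L + L * L)))))
    · rintro ⟨q, r1, r2⟩ hx
      simp only [Finset.mem_coe, Finset.mem_product, Finset.mem_range] at hx
      obtain ⟨hq, hr1, hr2⟩ := hx
      have hb1 : q * (L * L) + r1 < K * (L * L + L * L) := hbound q r1 hq (by omega)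
      have hb2 : q * (L * L) + L * L / 2 + r2 < K * (L * L + L * L) := by
        have : q * (L * L) + (L * L / 2 + r2) < K * (L * L + L * L) :=
          hbound q _ hq (by omega)
        omega
      rw [Finset.mem_coe, Finset.mem_filter]
      have hm1 : (q * (L * L) + r1) % (K * (L * L + L * L)) = q * (L * L) + r1 :=
        Nat.mod_eq_of_lt hb1
      have hm2 : (q * (L * L) + L * L / 2 + r2) % (K * (L * L + L * L)) =
          q * (L * L) + L * L / 2 + r2 := Nat.mod_eq_of_lt hb2
      constructor
      · rw [mem_offDiagPairs, Sym2.mk_isDiag_iff]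
        intro hcon
        have : (q * (L * L) + r1) % (K * (L * L + L * L)) =
            (q * (L * L) + L * L / 2 + r2) % (K * (L * L + L * L)) :=
          congrArg Fin.val hcon
        omega
      · rw [sameCluster_mk]
        show blockIdx (L * L) (L * L) _ = blockIdx (L * L) (L * L) _
        rw [blockIdx_eq _ _ hN0, blockIdx_eq _ _ hN0]
        simp only [hm1, hm2]
        rw [(divmod (L * L) q r1 hN0 (by omega)).1,
          show q * (L * L) + L * L / 2 + r2 = q * (L * L) + (L * L / 2 + r2) by omega,
          (divmod (L * L) q (L * L / 2 + r2) hN0 (by omega)).1]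
    · rintro ⟨q, r1, r2⟩ hx ⟨q', r1', r2'⟩ hx' heq
      simp only [Finset.coe_product, Set.mem_prod, Finset.mem_coe, Finset.mem_range] at hx hx'
      obtain ⟨hq, hr1, hr2⟩ := hx
      obtain ⟨hq', hr1', hr2'⟩ := hx'
      have hb1 : q * (L * L) + r1 < K * (L * L + L * L) := hbound q r1 hq (by omega)
      have hb2 : q * (L * L) + L * L / 2 + r2 < K * (L * L + L * L) := by
        have := hbound q (L * L / 2 + r2) hq (by omega); omega
      have hb1' : q' * (L * L) + r1' < K * (L * L + L * L) := hbound q' r1' hq' (by omega)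
      have hb2' : q' * (L * L) + L * L / 2 + r2' < K * (L * L + L * L) := by
        have := hbound q' (L * L / 2 + r2') hq' (by omega); omega
      rw [Sym2.eq_iff] at heq
      rcases heq with ⟨h1, h2⟩ | ⟨h1, h2⟩
      · have e1 : q * (L * L) + r1 = q' * (L * L) + r1' := by
          have := congrArg Fin.val h1
          simpa [Nat.mod_eq_of_lt hb1, Nat.mod_eq_of_lt hb1'] using this
        have e2 : q * (L * L) + L * L / 2 + r2 = q' * (L * L) + L * L / 2 + r2' := by
          have := congrArg Fin.val h2
          simpa [Nat.mod_eq_of_lt hb2, Nat.mod_eq_of_lt hb2'] using this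
        obtain ⟨g1, g2⟩ := rep_unique hN0 (show r1 < L * L by omega)
          (show r1' < L * L by omega) e1
        have e2' : q * (L * L) + (L * L / 2 + r2) = q' * (L * L) + (L * L / 2 + r2') := by
          omega
        obtain ⟨g3, g4⟩ := rep_unique hN0 (show L * L / 2 + r2 < L * L by omega)
          (show L * L / 2 + r2' < L * L by omega) e2'
        simp only [Prod.mk.injEq]
        omega
      · exfalso
        have e1 : q * (L * L) + r1 = q' * (L * L) + L * L / 2 + r2' := by
          have := congrArg Fin.val h1
          simpa [Nat.mod_eq_of_lt hb1, Nat.mod_eq_of_lt hb2'] using this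
        have e1' : q * (L * L) + r1 = q' * (L * L) + (L * L / 2 + r2') := by omega
        obtain ⟨g1, g2⟩ := rep_unique hN0 (show r1 < L * L by omega)
          (show L * L / 2 + r2' < L * L by omega) e1'
        omega
  calc 2 * K * (L * L / 2) * (L * L / 2)
      = ((Finset.range (2 * K)) ×ˢ
        ((Finset.range (L * L / 2)) ×ˢ (Finset.range (L * L / 2)))).card := by
        simp only [Finset.card_product, Finset.card_range]; ring
    _ ≤ _ := key

lemma extraV_pos (hK : 1 ≤ K) (hL : 5 ≤ L) :
    1 ≤ extraEdges (graphH K (L * L) (L * L))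
      (naturalLabel (L * L) (L * L) : Fin (K * (L * L + L * L)) → ℕ) := by
  have hN0 : 0 < L * L := by positivity
  have hNn : L * L < K * (L * L + L * L) := by nlinarith
  have hN1n : L * L - 1 < K * (L * L + L * L) := by omega
  rw [Nat.one_le_iff_ne_zero, ← Nat.pos_iff_ne_zero, extraEdges, Finset.card_pos]
  refine ⟨s((⟨L * L - 1, hN1n⟩ : Fin (K * (L * L + L * L))), (⟨L * L, hNn⟩ : _)), ?_⟩
  rw [Finset.mem_filter, mem_edgeFin, SimpleGraph.mem_edgeSet]
  constructor
  · rw [adj_iff]; left; left; show L * L - 1 + 1 = L * L; omega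
  · rw [sameCluster_mk]
    show ¬ blockIdx (L * L) (L * L) (L * L - 1) = blockIdx (L * L) (L * L) (L * L)
    rw [blockIdx_eq _ _ hN0, blockIdx_eq _ _ hN0, Nat.div_eq_of_lt (by omega),
      Nat.div_self hN0]
    omega

lemma imageV_card_le (hK : 1 ≤ K) (hL : 5 ≤ L) :
    ((Finset.univ : Finset (Fin (K * (L * L + L * L)))).image
      (naturalLabel (L * L) (L * L))).card ≤ 2 * K := by
  have hN0 : 0 < L * L := by positivity
  have hsub : (Finset.univ : Finset (Fin (K * (L * L + L * L)))).image
      (naturalLabel (L * L) (L * L)) ⊆ Finset.range (2 * K) := by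
    intro k hk
    rw [Finset.mem_image] at hk
    obtain ⟨v, -, rfl⟩ := hk
    rw [Finset.mem_range]
    show blockIdx (L * L) (L * L) v.val < 2 * K
    rw [blockIdx_eq _ _ hN0]
    apply Nat.div_lt_of_lt_mul
    calc v.val < K * (L * L + L * L) := v.isLt
      _ = L * L * (2 * K) := by ring
  calc _ ≤ (Finset.range (2 * K)).card := Finset.card_le_card hsub
    _ = 2 * K := Finset.card_range _

end Counting2
lemma sum_ratio (G : SimpleGraph V) (c : V → ℕ) (hm : numEdges G ≠ 0) :
    ∑ k ∈ Finset.univ.image c, (clusterDeg G c k : ℝ) / (2 * (numEdges G : ℝ)) = 1 := by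
  have hm' : (0:ℝ) < (numEdges G : ℝ) := by
    have : 1 ≤ numEdges G := Nat.one_le_iff_ne_zero.2 hm
    exact_mod_cast Nat.lt_of_lt_of_le Nat.zero_lt_one this
  rw [← Finset.sum_div, div_eq_one_iff_eq (by positivity)]
  rw [← Nat.cast_sum, sum_clusterDeg]
  push_cast; ring

lemma Q0_nonneg (G : SimpleGraph V) (c : V → ℕ) : 0 ≤ Q0 G c :=
  Finset.sum_nonneg (fun k _ => sq_nonneg _)

lemma Q0_ge (G : SimpleGraph V) (c : V → ℕ) (hm : numEdges G ≠ 0) (B : ℕ)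
    (hB : (Finset.univ.image c).card ≤ B) (hB0 : 0 < B) :
    1 / (B : ℝ) ≤ Q0 G c := by
  have hcs := sq_sum_le_card_mul_sum_sq
    (s := Finset.univ.image c) (f := fun k => (clusterDeg G c k : ℝ) / (2 * (numEdges G : ℝ)))
  rw [sum_ratio G c hm] at hcs
  have hQ0 : 0 ≤ Q0 G c := Q0_nonneg G c
  have hB0' : (0:ℝ) < (B:ℝ) := by exact_mod_cast hB0
  rw [div_le_iff₀ hB0']
  calc (1:ℝ) = 1 ^ 2 := by ring
    _ ≤ ((Finset.univ.image c).card : ℝ) * Q0 G c := hcs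
    _ ≤ (B : ℝ) * Q0 G c := by
        apply mul_le_mul_of_nonneg_right _ hQ0
        exact_mod_cast hB
    _ = Q0 G c * (B : ℝ) := mul_comm _ _

lemma Q0_le (G : SimpleGraph V) (c : V → ℕ) (hm : numEdges G ≠ 0) (D : ℕ)
    (hD : ∀ k, clusterDeg G c k ≤ D) :
    Q0 G c ≤ (D : ℝ) / (2 * (numEdges G : ℝ)) := by
  have hm' : (0:ℝ) < (numEdges G : ℝ) := by
    have : 1 ≤ numEdges G := Nat.one_le_iff_ne_zero.2 hm
    exact_mod_cast Nat.lt_of_lt_of_le Nat.zero_lt_one this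
  have step : Q0 G c ≤ ((D : ℝ) / (2 * (numEdges G : ℝ))) *
      ∑ k ∈ Finset.univ.image c, (clusterDeg G c k : ℝ) / (2 * (numEdges G : ℝ)) := by
    rw [Finset.mul_sum, Q0]
    apply Finset.sum_le_sum
    intro k _
    rw [sq]
    apply mul_le_mul_of_nonneg_right _ (by positivity)
    apply div_le_div_of_nonneg_right _ (by positivity)
    · exact_mod_cast hD k
  rw [sum_ratio G c hm, mul_one] at step
  exact step
end BadCommP

open BadComm
open BadCommP

set_option maxHeartbeats 2000000 in
/-- Theorem 6 of the paper: for every `K ≥ 1` and `ε ∈ (0, 1/(2K))`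
there are `N₁, N₂ ≥ 5` and `1 ≤ J ≤ K(N₁+N₂)` with
`Q_N(𝐕, H) < 1 − 1/(2K) < 1 − ε < Q_N(𝐔, H)` and `S(𝐕,𝐔) < ε`. -/
theorem statement18 (K : ℕ) (hK : 1 ≤ K) (ε : ℝ) (hε0 : 0 < ε) (hε1 : ε < 1 / (2 * (K : ℝ))) :
    ∃ N1 N2 J : ℕ, 5 ≤ N1 ∧ 5 ≤ N2 ∧ 1 ≤ J ∧ J ≤ K * (N1 + N2) ∧
      QN (graphH K N1 N2) (naturalLabel N1 N2) < 1 - 1 / (2 * (K : ℝ)) ∧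
      (1 : ℝ) - 1 / (2 * (K : ℝ)) < 1 - ε ∧
      1 - ε < QN (graphH K N1 N2) (uLabel J) ∧
      jaccard (naturalLabel N1 N2 : Fin (K * (N1 + N2)) → ℕ) (uLabel J) < ε := by
  classical
  set L : ℕ := max 5 (Nat.floor (10 / ε) + 1) with hLdef
  have hL5 : 5 ≤ L := le_max_left _ _
  have hLpos : (0:ℝ) < (L:ℝ) := by
    have : (5:ℝ) ≤ (L:ℝ) := by exact_mod_cast hL5
    linarith
  have hKpos : (0:ℝ) < (K:ℝ) := by exact_mod_cast Nat.lt_of_lt_of_le Nat.zero_lt_one hK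
  have hLε : 10 / ε < (L : ℝ) := by
    calc 10 / ε < (Nat.floor (10 / ε) : ℝ) + 1 := Nat.lt_floor_add_one _
      _ = ((Nat.floor (10 / ε) + 1 : ℕ) : ℝ) := by push_cast; ring
      _ ≤ (L : ℝ) := by exact_mod_cast le_max_right 5 (Nat.floor (10 / ε) + 1)
  have hεL : 10 / (L : ℝ) < ε := by
    rw [div_lt_iff₀ hLpos]
    rw [div_lt_iff₀ hε0] at hLε
    linarith
  have hL25 : 25 ≤ L * L := Nat.mul_le_mul hL5 hL5
  set n : ℕ := K * (L * L + L * L) with hndef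
  set G := graphH K (L * L) (L * L) with hGdef
  set m : ℕ := numEdges G with hmdef
  -- lower bound on m
  have hn2 : 2 ≤ n := by
    have : 1 * (25 + 25) ≤ K * (L * L + L * L) := Nat.mul_le_mul hK (by omega)
    omega
  have h2m : n ≤ 2 * m := by
    have hh := handshake G
    have : (Finset.univ : Finset (Fin n)).card • 1 ≤ ∑ v, deg G v :=
      Finset.card_nsmul_le_sum _ _ _ (fun v _ => one_le_deg hn2 v)
    simp only [smul_eq_mul, mul_one, Finset.card_univ, Fintype.card_fin] at this
    omega
  have hmKL : K * (L * L) ≤ m := by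
    have hb : K * (L * L + L * L) = 2 * (K * (L * L)) := by ring
    omega
  have hm0 : m ≠ 0 := by
    have : 0 < K * (L * L) := Nat.mul_pos (by omega) (by omega)
    omega
  have hmR : (0:ℝ) < (m:ℝ) := by
    exact_mod_cast Nat.lt_of_lt_of_le Nat.zero_lt_one (Nat.one_le_iff_ne_zero.2 hm0)
  have hmKLR : (K:ℝ) * (L:ℝ) * (L:ℝ) ≤ (m:ℝ) := by
    have : ((K * (L * L) : ℕ) : ℝ) ≤ (m:ℝ) := by exact_mod_cast hmKL
    push_cast at this; linarith [this]
  refine ⟨L * L, L * L, 2 * K * L, by omega, by omega, ?_, ?_, ?_, ?_, ?_, ?_⟩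
  · exact Nat.one_le_iff_ne_zero.2 (by positivity)
  · have h1 : 2 * K * L ≤ 2 * K * (L * L) :=
      Nat.mul_le_mul_left _ (Nat.le_mul_of_pos_left L (by omega))
    have h2 : 2 * K * (L * L) = K * (L * L + L * L) := by ring
    omega
  -- QN (V) < 1 - 1/(2K)
  · have hintra : intraEdges G (naturalLabel (L * L) (L * L)) + 1 ≤ m := by
      have h1 := intra_add_extra G (naturalLabel (L * L) (L * L) : Fin n → ℕ)
      have h2 : 1 ≤ extraEdges G (naturalLabel (L * L) (L * L)) := extraV_pos K L hK hL5
      omega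
    have hQf : Qf G (naturalLabel (L * L) (L * L)) ≤ ((m:ℝ) - 1) / m := by
      rw [Qf]
      have hc : (intraEdges G (naturalLabel (L * L) (L * L)) : ℝ) + 1 ≤ (m:ℝ) := by
        exact_mod_cast hintra
      apply div_le_div₀ (by linarith) (by linarith) hmR le_rfl
    have hQ0 : 1 / (2 * (K:ℝ)) ≤ Q0 G (naturalLabel (L * L) (L * L)) := by
      have := Q0_ge G (naturalLabel (L * L) (L * L) : Fin n → ℕ) hm0 (2 * K)
        (imageV_card_le K L hK hL5) (by omega)
      calc 1 / (2 * (K:ℝ)) = 1 / ((2 * K : ℕ) : ℝ) := by push_cast; ring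
        _ ≤ _ := this
    rw [QN]
    have : ((m:ℝ) - 1) / m < 1 := by
      rw [div_lt_one hmR]; linarith
    linarith
  · linarith
  -- 1 - ε < QN (U)
  · have hintra := intra_add_extra G (uLabel (2 * K * L) : Fin n → ℕ)
    have hextra : extraEdges G (uLabel (2 * K * L)) ≤ 8 * K * L := extraU_le K L hK hL5
    have hQf : 1 - (8 * (K:ℝ) * L) / m ≤ Qf G (uLabel (2 * K * L)) := by
      have h1 : m ≤ intraEdges G (uLabel (2 * K * L)) + 8 * K * L := by omega
      have h1' : (m:ℝ) ≤ (intraEdges G (uLabel (2 * K * L)) : ℝ) + 8 * (K:ℝ) * L := by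
        have := (Nat.cast_le (α := ℝ)).2 h1
        push_cast at this
        linarith
      rw [Qf, sub_le_iff_le_add, ← add_div, le_div_iff₀ hmR, one_mul]
      apply le_trans h1'
      apply le_of_eq
      push_cast
      ring
    have hQ0 : Q0 G (uLabel (2 * K * L)) ≤ (2 * (L:ℝ)) / m := by
      have hcd : ∀ j, clusterDeg G (uLabel (2 * K * L) : Fin n → ℕ) j ≤ 4 * L :=
        clusterDeg_le K L hK hL5
      have := Q0_le G (uLabel (2 * K * L) : Fin n → ℕ) hm0 (4 * L) hcd
      calc Q0 G (uLabel (2 * K * L)) ≤ ((4 * L : ℕ) : ℝ) / (2 * (m:ℝ)) := this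
        _ = (2 * (L:ℝ)) / m := by push_cast; field_simp; ring
    rw [QN]
    have hKL1 : (1:ℝ) ≤ (K:ℝ) := by exact_mod_cast hK
    have hfrac : (8 * (K:ℝ) * L) / m + (2 * (L:ℝ)) / m ≤ 10 / L := by
      rw [← add_div, div_le_div_iff₀ hmR hLpos]
      have hsq : (1:ℝ) * ((L:ℝ) * L) ≤ (K:ℝ) * ((L:ℝ) * L) :=
        mul_le_mul_of_nonneg_right hKL1 (by positivity)
      have : (8 * (K:ℝ) * L + 2 * L) * L ≤ 10 * ((K:ℝ) * L * L) := by nlinarith [hsq]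
      linarith [this, mul_le_mul_of_nonneg_left hmKLR (by norm_num : (0:ℝ) ≤ 10)]
    have := hεL
    linarith
  -- jaccard
  · set c1 : Fin n → ℕ := naturalLabel (L * L) (L * L) with hc1
    set c2 : Fin n → ℕ := uLabel (2 * K * L) with hc2
    have ha11 : a11 c1 c2 ≤ n * L := by
      calc a11 c1 c2 ≤ samePairCount c2 := by
            apply Finset.card_le_card
            intro p hp
            rw [Finset.mem_filter] at hp ⊢
            exact ⟨hp.1, hp.2.2⟩
        _ ≤ n * L := sU_le K L hK hL5
    have hsplit : a10 c1 c2 + a11 c1 c2 = samePairCount c1 := by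
      have h1 : (offDiagPairs (Fin n)).filter (fun p => sameCluster c1 p ∧ sameCluster c2 p) =
          ((offDiagPairs (Fin n)).filter (fun p => sameCluster c1 p)).filter
            (fun p => sameCluster c2 p) := by
        rw [Finset.filter_filter]
      have h2 : (offDiagPairs (Fin n)).filter (fun p => sameCluster c1 p ∧ ¬ sameCluster c2 p) =
          ((offDiagPairs (Fin n)).filter (fun p => sameCluster c1 p)).filter
            (fun p => ¬ sameCluster c2 p) := by
        rw [Finset.filter_filter]
      rw [a10, a11, h1, h2, samePairCount, add_comm]
      exact Finset.card_filter_add_card_filter_not _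
    set H : ℕ := L * L / 2 with hHdef
    have hHn : 2 * K * H * H ≤ samePairCount c1 := sV_ge K L hK hL5
    have hH3 : L * L ≤ 3 * H := by omega
    have hH0 : 0 < H := by omega
    have hden : (2 * (K:ℝ) * H * H) ≤ ((a10 c1 c2 : ℝ) + (a01 c1 c2) + (a11 c1 c2)) := by
      have h1 : 2 * K * H * H ≤ a10 c1 c2 + a01 c1 c2 + a11 c1 c2 := by omega
      exact_mod_cast h1
    have hdenpos : (0:ℝ) < 2 * (K:ℝ) * H * H := by
      have : (0:ℝ) < (H:ℝ) := by exact_mod_cast hH0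
      positivity
    have hnum : (a11 c1 c2 : ℝ) ≤ 2 * (K:ℝ) * L * L * L := by
      have h1 : (a11 c1 c2 : ℝ) ≤ ((n * L : ℕ) : ℝ) := by exact_mod_cast ha11
      have h2 : ((n * L : ℕ) : ℝ) = 2 * (K:ℝ) * L * L * L := by
        rw [hndef]; push_cast; ring
      linarith
    rw [jaccard]
    have hjac : (a11 c1 c2 : ℝ) / ((a10 c1 c2 : ℝ) + (a01 c1 c2) + (a11 c1 c2)) ≤
        (2 * (K:ℝ) * L * L * L) / (2 * (K:ℝ) * H * H) :=
      div_le_div₀ (by positivity) hnum hdenpos hden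
    have hfinal : (2 * (K:ℝ) * L * L * L) / (2 * (K:ℝ) * H * H) ≤ 9 / L := by
      rw [div_le_div_iff₀ hdenpos hLpos]
      have hHr : ((L:ℝ) * L) ≤ 3 * (H:ℝ) := by exact_mod_cast hH3
      have hHpos : (0:ℝ) < (H:ℝ) := by exact_mod_cast hH0
      have h4 : ((L:ℝ) * L) * ((L:ℝ) * L) ≤ (3 * (H:ℝ)) * (3 * (H:ℝ)) :=
        mul_le_mul hHr hHr (by positivity) (by positivity)
      have h5 : (0:ℝ) ≤ 2 * (K:ℝ) := by positivity
      nlinarith [mul_le_mul_of_nonneg_left h4 h5]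
    have h9 : (9:ℝ) / L < ε := by
      have : (9:ℝ) / L ≤ 10 / L :=
        div_le_div₀ (by norm_num) (by norm_num) hLpos le_rfl
      linarith
    linarith
end
end

section
/- Fix an integer K ≥ 1 and for each integer x ≥ 1 set N₁ = 3, J = xK and N₂ = x²K, and let n = K(3 + x²K). Then the number c of unordered node pairs lying in the same cluster under the natural clustering 𝐕_{K,3,x²K} of G_{K,3,x²K} equals c = 3K + K·x²K(x²K − 1)/2 = (1/2)K³x⁴ − (1/2)K²x² + 3K, and the number b of unordered node pairs lying in the same cluster under 𝐔_{K,3,x²K,xK} satisfies b < 4K³x³ + 4K²x² for all sufficiently large x. -/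
open scoped Classical

noncomputable section

open BadComm

open Finset in
lemma samePairCount_key {V : Type*} [Fintype V] (c : V → ℕ) :
    2 * samePairCount c + Fintype.card V =
      ∑ k ∈ Finset.univ.image c, ((Finset.univ.filter (fun v => c v = k)).card) ^ 2 := by
  classical
  set S := (offDiagPairs V).filter (fun p => sameCluster c p) with hS
  set T := (Finset.univ : Finset (V × V)).filter (fun p => p.1 ≠ p.2 ∧ c p.1 = c p.2) with hT
  set W := (Finset.univ : Finset (V × V)).filter (fun p => c p.1 = c p.2) with hW
  have h1 : T.card = 2 * S.card := by
    have hmap : ∀ p ∈ T, Sym2.mk p.1 p.2 ∈ S := by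
      rintro ⟨u, v⟩ hp
      simp only [hT, mem_filter, mem_univ, true_and] at hp
      rw [hS, Finset.mem_filter, offDiagPairs, Finset.mem_filter]
      simp only [mem_univ, true_and, sameCluster]
      refine ⟨by simpa using hp.1, ?_⟩
      intro a ha b hb
      rw [Sym2.mem_iff] at ha hb
      rcases ha with rfl | rfl <;> rcases hb with rfl | rfl <;>
        first | rfl | exact hp.2 | exact hp.2.symm
    rw [Finset.card_eq_sum_card_fiberwise hmap]
    have h2 : ∀ z ∈ S, (T.filter (fun p => Sym2.mk p.1 p.2 = z)).card = 2 := by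
      intro z hz
      induction z using Sym2.ind with
      | _ u v =>
        rw [hS, Finset.mem_filter, offDiagPairs, Finset.mem_filter] at hz
        simp only [mem_univ, true_and, sameCluster] at hz
        have huv : u ≠ v := fun h => hz.1 (Sym2.mk_isDiag_iff.2 h)
        have hc : c u = c v := hz.2 u (by simp) v (by simp)
        have hset : T.filter (fun p => Sym2.mk p.1 p.2 = s(u, v)) = {(u, v), (v, u)} := by
          ext ⟨a, b⟩
          simp only [hT, mem_filter, mem_univ, true_and, mem_insert, mem_singleton,
            Prod.mk.injEq]
          constructor
          · rintro ⟨-, h⟩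
            rcases Sym2.eq_iff.1 h with ⟨rfl, rfl⟩ | ⟨rfl, rfl⟩ <;> simp
          · rintro (⟨rfl, rfl⟩ | ⟨rfl, rfl⟩)
            · exact ⟨⟨huv, hc⟩, rfl⟩
            · exact ⟨⟨huv.symm, hc.symm⟩, Sym2.eq_swap⟩
        rw [hset, Finset.card_pair (by simp [Prod.ext_iff]; tauto)]
    rw [Finset.sum_congr rfl h2, Finset.sum_const, smul_eq_mul, mul_comm]
  have hdiag : (W.filter (fun p : V × V => p.1 = p.2)).card = Fintype.card V := by
    have heq : W.filter (fun p : V × V => p.1 = p.2) = (Finset.univ : Finset V).diag := by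
      ext ⟨a, b⟩
      simp only [hW, mem_filter, mem_univ, true_and, Finset.mem_diag]
      aesop
    rw [heq, Finset.diag_card, Finset.card_univ]
  have hT' : W.filter (fun p : V × V => ¬ p.1 = p.2) = T := by
    ext ⟨a, b⟩
    simp only [hW, hT, mem_filter, mem_univ, true_and]
    tauto
  have h3 : W.card = Fintype.card V + T.card := by
    rw [← Finset.card_filter_add_card_filter_not (s := W)
      (p := fun p : V × V => p.1 = p.2), hdiag, hT']
  have h4 : W.card = ∑ k ∈ Finset.univ.image c,
      ((Finset.univ.filter (fun v => c v = k)).card) ^ 2 := by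
    have hmap : ∀ p ∈ W, c p.1 ∈ Finset.univ.image c :=
      fun p _ => Finset.mem_image_of_mem c (mem_univ _)
    rw [Finset.card_eq_sum_card_fiberwise hmap]
    refine Finset.sum_congr rfl fun k hk => ?_
    have heq : W.filter (fun p : V × V => c p.1 = k) =
        (Finset.univ.filter (fun v => c v = k)) ×ˢ (Finset.univ.filter (fun v => c v = k)) := by
      ext ⟨a, b⟩
      simp only [hW, mem_filter, mem_univ, true_and, Finset.mem_product]
      constructor
      · rintro ⟨h1, h2⟩; exact ⟨h2, h1 ▸ h2⟩
      · rintro ⟨h1, h2⟩; exact ⟨h1.trans h2.symm, h1⟩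
    rw [heq, Finset.card_product, sq]
  have h5 : samePairCount c = S.card := rfl
  omega

lemma card_filter_Ico {n a b : ℕ} (hb : b ≤ n) :
    ((Finset.univ : Finset (Fin n)).filter (fun u => a ≤ u.val ∧ u.val < b)).card = b - a := by
  rw [← Nat.card_Ico a b]
  apply Finset.card_nbij (i := fun u : Fin n => u.val)
  · intro u hu
    simp only [Finset.mem_coe, Finset.mem_filter] at hu
    rw [Finset.mem_coe, Finset.mem_Ico]
    exact hu.2
  · intro u _ v _ h
    exact Fin.val_injective h
  · intro m hm
    simp only [Finset.coe_Ico, Set.mem_Ico] at hm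
    refine ⟨⟨m, lt_of_lt_of_le hm.2 hb⟩, ?_, rfl⟩
    simp only [Finset.mem_coe, Finset.mem_filter, Finset.mem_univ, true_and]
    exact hm

lemma div_eq_iff_interval {s : ℕ} (hs : 0 < s) (u q : ℕ) :
    u / s = q ↔ q * s ≤ u ∧ u < q * s + s := by
  have h1 : u / s = q ↔ q ≤ u / s ∧ u / s < q + 1 := by omega
  rw [h1, Nat.le_div_iff_mul_le hs, Nat.div_lt_iff_lt_mul hs, Nat.succ_mul]

lemma blockIdx_eq_even_iff {N1 N2 : ℕ} (hN1 : 0 < N1) (hN2 : 0 < N2) (u q : ℕ) :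
    blockIdx N1 N2 u = 2 * q ↔ q * (N1 + N2) ≤ u ∧ u < q * (N1 + N2) + N1 := by
  have hs : 0 < N1 + N2 := by omega
  have hm := Nat.div_add_mod u (N1 + N2)
  have hlt : u % (N1 + N2) < N1 + N2 := Nat.mod_lt _ hs
  have hdq := div_eq_iff_interval hs u q
  unfold blockIdx
  split_ifs with hr
  · constructor
    · intro h
      have hdu : u / (N1 + N2) = q := by omega
      rw [hdu, Nat.mul_comm] at hm
      omega
    · rintro ⟨h1, h2⟩
      have hdu : u / (N1 + N2) = q := hdq.2 ⟨h1, by omega⟩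
      rw [hdu, Nat.mul_comm] at hm
      omega
  · constructor
    · intro h
      omega
    · rintro ⟨h1, h2⟩
      have hdu : u / (N1 + N2) = q := hdq.2 ⟨h1, by omega⟩
      rw [hdu, Nat.mul_comm] at hm
      omega

lemma blockIdx_eq_odd_iff {N1 N2 : ℕ} (hN1 : 0 < N1) (hN2 : 0 < N2) (u q : ℕ) :
    blockIdx N1 N2 u = 2 * q + 1 ↔
      q * (N1 + N2) + N1 ≤ u ∧ u < q * (N1 + N2) + (N1 + N2) := by
  have hs : 0 < N1 + N2 := by omega
  have hm := Nat.div_add_mod u (N1 + N2)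
  have hlt : u % (N1 + N2) < N1 + N2 := Nat.mod_lt _ hs
  have hdq := div_eq_iff_interval hs u q
  unfold blockIdx
  split_ifs with hr
  · constructor
    · intro h
      omega
    · rintro ⟨h1, h2⟩
      have hdu : u / (N1 + N2) = q := hdq.2 ⟨by omega, by omega⟩
      rw [hdu, Nat.mul_comm] at hm
      omega
  · constructor
    · intro h
      have hdu : u / (N1 + N2) = q := by omega
      rw [hdu, Nat.mul_comm] at hm
      omega
    · rintro ⟨h1, h2⟩
      have hdu : u / (N1 + N2) = q := hdq.2 ⟨by omega, by omega⟩
      rw [hdu, Nat.mul_comm] at hm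
      omega

lemma natural_fiber_card {K N1 N2 : ℕ} (hN1 : 0 < N1) (hN2 : 0 < N2) {k : ℕ}
    (hk : k < 2 * K) :
    ((Finset.univ : Finset (Fin (K * (N1 + N2)))).filter
      (fun v => naturalLabel N1 N2 v = k)).card = if k % 2 = 0 then N1 else N2 := by
  have hs : 0 < N1 + N2 := by omega
  have hle : (k / 2) * (N1 + N2) + (N1 + N2) ≤ K * (N1 + N2) := by
    have h1 : k / 2 + 1 ≤ K := by omega
    calc (k / 2) * (N1 + N2) + (N1 + N2) = (k / 2 + 1) * (N1 + N2) := by ring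
    _ ≤ K * (N1 + N2) := Nat.mul_le_mul_right _ h1
  rcases Nat.mod_two_eq_zero_or_one k with h2 | h2
  · obtain ⟨q, rfl⟩ : ∃ q, k = 2 * q := ⟨k / 2, by omega⟩
    have hq2 : (2 * q) / 2 = q := by omega
    rw [hq2] at hle
    rw [Finset.filter_congr (fun v _ => blockIdx_eq_even_iff hN1 hN2 v.val q),
      card_filter_Ico (by omega), if_pos h2]
    omega
  · obtain ⟨q, rfl⟩ : ∃ q, k = 2 * q + 1 := ⟨k / 2, by omega⟩
    have hq2 : (2 * q + 1) / 2 = q := by omega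
    rw [hq2] at hle
    rw [Finset.filter_congr (fun v _ => blockIdx_eq_odd_iff hN1 hN2 v.val q),
      card_filter_Ico (by omega), if_neg (by omega)]
    omega

lemma natural_image {K N1 N2 : ℕ} (hN1 : 0 < N1) (hN2 : 0 < N2) (hK : 0 < K) :
    Finset.univ.image (naturalLabel N1 N2 : Fin (K * (N1 + N2)) → ℕ) =
      Finset.range (2 * K) := by
  have hs : 0 < N1 + N2 := by omega
  ext k
  simp only [Finset.mem_image, Finset.mem_range, Finset.mem_univ, true_and]
  constructor
  · rintro ⟨v, rfl⟩
    have hd : v.val / (N1 + N2) < K := (Nat.div_lt_iff_lt_mul hs).2 (by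
      have := v.isLt; omega)
    unfold naturalLabel blockIdx
    split_ifs <;> omega
  · intro hk
    rcases Nat.mod_two_eq_zero_or_one k with h2 | h2
    · obtain ⟨q, rfl⟩ : ∃ q, k = 2 * q := ⟨k / 2, by omega⟩
      have hq : q + 1 ≤ K := by omega
      have hb : (q + 1) * (N1 + N2) ≤ K * (N1 + N2) := Nat.mul_le_mul_right _ hq
      have heq : (q + 1) * (N1 + N2) = q * (N1 + N2) + (N1 + N2) := by ring
      refine ⟨⟨q * (N1 + N2), by omega⟩, ?_⟩
      show blockIdx N1 N2 (q * (N1 + N2)) = 2 * q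
      exact (blockIdx_eq_even_iff hN1 hN2 _ q).2 ⟨le_refl _, by omega⟩
    · obtain ⟨q, rfl⟩ : ∃ q, k = 2 * q + 1 := ⟨k / 2, by omega⟩
      have hq : q + 1 ≤ K := by omega
      have hb : (q + 1) * (N1 + N2) ≤ K * (N1 + N2) := Nat.mul_le_mul_right _ hq
      have heq : (q + 1) * (N1 + N2) = q * (N1 + N2) + (N1 + N2) := by ring
      refine ⟨⟨q * (N1 + N2) + N1, by omega⟩, ?_⟩
      show blockIdx N1 N2 (q * (N1 + N2) + N1) = 2 * q + 1
      exact (blockIdx_eq_odd_iff hN1 hN2 _ q).2 ⟨le_refl _, by omega⟩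

lemma uLabel_fiber_card {n J L R : ℕ} (hL : n / J = L) (hn : n = J * L + R)
    (hR : 0 < R) (hLpos : 0 < L) {k : ℕ} (hk : k < J + 1) :
    ((Finset.univ : Finset (Fin n)).filter (fun v => uLabel J v = k)).card =
      if k < J then L else R := by
  by_cases hkJ : k < J
  · have hb : k * L + L ≤ n := by
      have h1 : (k + 1) * L ≤ J * L := Nat.mul_le_mul_right _ (by omega)
      have h2 : (k + 1) * L = k * L + L := by ring
      omega
    have hiff : ∀ v : Fin n, uLabel J v = k ↔ k * L ≤ v.val ∧ v.val < k * L + L := by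
      intro v
      unfold uLabel
      rw [hL]
      have hd := div_eq_iff_interval hLpos v.val k
      omega
    rw [Finset.filter_congr (fun v _ => hiff v), card_filter_Ico hb, if_pos hkJ]
    omega
  · have hkJ' : k = J := by omega
    have hiff : ∀ v : Fin n, uLabel J v = k ↔ J * L ≤ v.val ∧ v.val < n := by
      intro v
      unfold uLabel
      rw [hL]
      have hd : J ≤ v.val / L ↔ J * L ≤ v.val := Nat.le_div_iff_mul_le hLpos
      have := v.isLt
      omega
    rw [Finset.filter_congr (fun v _ => hiff v), card_filter_Ico (le_refl n), if_neg hkJ]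
    omega

lemma uLabel_image {n J L R : ℕ} (hL : n / J = L) (hn : n = J * L + R)
    (hR : 0 < R) (hLpos : 0 < L) :
    Finset.univ.image (uLabel J : Fin n → ℕ) = Finset.range (J + 1) := by
  ext k
  simp only [Finset.mem_image, Finset.mem_range, Finset.mem_univ, true_and]
  constructor
  · rintro ⟨v, rfl⟩
    have := min_le_right (v.val / (n / J)) J
    unfold uLabel
    omega
  · intro hk
    have hcancel : ∀ m : ℕ, m * L / L = m := fun m => Nat.mul_div_cancel m hLpos
    by_cases hkJ : k < J
    · have hb : k * L + L ≤ n := by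
        have h1 : (k + 1) * L ≤ J * L := Nat.mul_le_mul_right _ (by omega)
        have h2 : (k + 1) * L = k * L + L := by ring
        omega
      refine ⟨⟨k * L, by omega⟩, ?_⟩
      show min (k * L / (n / J)) J = k
      rw [hL, hcancel k]
      omega
    · have hkJ' : k = J := by omega
      refine ⟨⟨J * L, by omega⟩, ?_⟩
      show min (J * L / (n / J)) J = k
      rw [hL, hcancel J]
      omega

lemma sum_alt (K A B : ℕ) :
    ∑ k ∈ Finset.range (2 * K), (if k % 2 = 0 then A else B) = K * A + K * B := by
  induction K with
  | zero => simp
  | succ K ih =>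
    rw [show 2 * (K + 1) = 2 * K + 1 + 1 by ring, Finset.sum_range_succ,
      Finset.sum_range_succ, ih, if_pos (by omega), if_neg (by omega)]
    ring

/-- with `N₁ = 3`, `J = xK`, `N₂ = x²K`, `n = K(3 + x²K)`: the number `c`
of node pairs in the same cluster under the natural clustering of `G_{K,3,x²K}` equals
`3K + K·x²K(x²K−1)/2 = (1/2)K³x⁴ − (1/2)K²x² + 3K`, and the number `b` of node pairs in
the same cluster under `𝐔_{K,3,x²K,xK}` satisfies `b < 4K³x³ + 4K²x²` for all
sufficiently large `x`. -/
theorem statement19 (K : ℕ) (hK : 1 ≤ K) :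
    (∀ x : ℕ, 1 ≤ x →
      ((samePairCount (naturalLabel 3 (x ^ 2 * K) : Fin (K * (3 + x ^ 2 * K)) → ℕ) : ℝ) =
          3 * (K : ℝ) +
            (K : ℝ) * ((x : ℝ) ^ 2 * (K : ℝ)) * ((x : ℝ) ^ 2 * (K : ℝ) - 1) / 2 ∧
        (samePairCount (naturalLabel 3 (x ^ 2 * K) : Fin (K * (3 + x ^ 2 * K)) → ℕ) : ℝ) =
          (1 / 2) * (K : ℝ) ^ 3 * (x : ℝ) ^ 4 - (1 / 2) * (K : ℝ) ^ 2 * (x : ℝ) ^ 2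
            + 3 * (K : ℝ))) ∧
    (∃ x0 : ℕ, ∀ x : ℕ, x0 ≤ x →
      (samePairCount (uLabel (x * K) : Fin (K * (3 + x ^ 2 * K)) → ℕ) : ℝ) <
        4 * (K : ℝ) ^ 3 * (x : ℝ) ^ 3 + 4 * (K : ℝ) ^ 2 * (x : ℝ) ^ 2) := by
  constructor
  · intro x hx
    have hN2 : 0 < x ^ 2 * K := by positivity
    have hkey := samePairCount_key (naturalLabel 3 (x ^ 2 * K) :
      Fin (K * (3 + x ^ 2 * K)) → ℕ)
    rw [Fintype.card_fin, natural_image (by norm_num) hN2 (by omega)] at hkey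
    have hsum : ∑ k ∈ Finset.range (2 * K),
        ((Finset.univ.filter (fun v : Fin (K * (3 + x ^ 2 * K)) =>
          naturalLabel 3 (x ^ 2 * K) v = k)).card) ^ 2 =
        K * 3 ^ 2 + K * ((x ^ 2 * K) ^ 2) := by
      rw [Finset.sum_congr rfl (fun k hk => by
        rw [natural_fiber_card (by norm_num) hN2 (Finset.mem_range.1 hk),
          apply_ite (· ^ 2)]), sum_alt]
    rw [hsum] at hkey
    have hcast : 2 * (samePairCount (naturalLabel 3 (x ^ 2 * K) :
          Fin (K * (3 + x ^ 2 * K)) → ℕ) : ℝ) + (K : ℝ) * (3 + (x : ℝ) ^ 2 * K) =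
        (K : ℝ) * 3 ^ 2 + (K : ℝ) * ((x : ℝ) ^ 2 * K) ^ 2 := by
      exact_mod_cast hkey
    constructor
    · linear_combination hcast / 2
    · linear_combination hcast / 2
  · refine ⟨4, fun x hx => ?_⟩
    have hK' : (1 : ℝ) ≤ (K : ℝ) := by exact_mod_cast hK
    have hx' : (4 : ℝ) ≤ (x : ℝ) := by exact_mod_cast hx
    have hxK : 0 < x * K := by positivity
    have hn : K * (3 + x ^ 2 * K) = (x * K) * (x * K) + 3 * K := by ring
    have hL : (K * (3 + x ^ 2 * K)) / (x * K) = x * K := by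
      rw [hn, Nat.mul_add_div hxK]
      have h3 : 3 * K < x * K := by
        apply Nat.mul_lt_mul_of_lt_of_le (by omega) (le_refl K) (by omega)
      rw [Nat.div_eq_of_lt h3]
      omega
    have hkey := samePairCount_key (uLabel (x * K) : Fin (K * (3 + x ^ 2 * K)) → ℕ)
    rw [Fintype.card_fin, uLabel_image hL hn (by omega) hxK] at hkey
    have hsum : ∑ k ∈ Finset.range (x * K + 1),
        ((Finset.univ.filter (fun v : Fin (K * (3 + x ^ 2 * K)) =>
          uLabel (x * K) v = k)).card) ^ 2 =
        (x * K) * (x * K) ^ 2 + (3 * K) ^ 2 := by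
      rw [Finset.sum_range_succ,
        uLabel_fiber_card hL hn (by omega) hxK (by omega), if_neg (lt_irrefl _)]
      congr 1
      rw [Finset.sum_congr rfl (fun k hk => by
        rw [uLabel_fiber_card hL hn (by omega) hxK
            (by have := Finset.mem_range.1 hk; omega),
          if_pos (Finset.mem_range.1 hk)]), Finset.sum_const, Finset.card_range,
        smul_eq_mul]
    rw [hsum] at hkey
    have hcast : 2 * (samePairCount (uLabel (x * K) :
          Fin (K * (3 + x ^ 2 * K)) → ℕ) : ℝ) + (K : ℝ) * (3 + (x : ℝ) ^ 2 * K) =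
        ((x : ℝ) * K) * ((x : ℝ) * K) ^ 2 + (3 * (K : ℝ)) ^ 2 := by
      exact_mod_cast hkey
    have hKpos : (0 : ℝ) < (K : ℝ) := by linarith
    have f1 : (0 : ℝ) ≤ (K : ℝ) ^ 3 * (x : ℝ) ^ 3 := by positivity
    have f2 : 9 * (K : ℝ) ^ 2 ≤ 8 * (K : ℝ) ^ 2 * (x : ℝ) ^ 2 := by
      nlinarith [sq_nonneg ((K : ℝ)), sq_nonneg ((x : ℝ) - 4), mul_pos hKpos hKpos]
    nlinarith [hcast, f1, f2, hKpos, mul_pos hKpos hKpos]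
end
end
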